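/- arXiv:2202.07694 — 8 statements merged into one kernel-verified Lean document; each statement's English description precedes it below -/
import Mathlib

section
/- Let G be a nonempty gapset with multiplicity m, Kunz coordinates (k_1, …, k_{m−1}), conductor c and depth q = ⌈c/m⌉. Then q = max{k_i : 1 ≤ i ≤ m−1}. -/
def IsGapset (G : Finset ℕ) : Prop :=
  0 ∉ G ∧ ∀ z ∈ G, ∀ x y : ℕ, 0 < x → 0 < y → x + y = z → x ∈ G ∨ y ∈ G

def IsNumSgp (S : Set ℕ) : Prop :=
  0 ∈ S ∧ (∀ a ∈ S, ∀ b ∈ S, a + b ∈ S) ∧ Sᶜ.Finite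

noncomputable def mult (G : Finset ℕ) : ℕ := sInf {s : ℕ | 0 < s ∧ s ∉ G}

noncomputable def kunz (G : Finset ℕ) (i : ℕ) : ℕ := (G.filter (fun z => z % mult G = i)).card

noncomputable def gapConductor (G : Finset ℕ) : ℕ := sInf {s : ℕ | 0 < s ∧ ∀ n : ℕ, s + n ∉ G}

noncomputable def gapDepth (G : Finset ℕ) : ℕ := (gapConductor G + mult G - 1) / mult G

def KunzIneq (m : ℕ) (k : ℕ → ℕ) : Prop :=
  (∀ i j : ℕ, 1 ≤ i → i ≤ j → j ≤ m - 1 → i + j < m → k (i + j) ≤ k i + k j) ∧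
  (∀ i j : ℕ, 1 ≤ i → i ≤ j → j ≤ m - 1 → m < i + j → k (i + j - m) ≤ k i + k j + 1)

theorem depth_eq_max_kunz (G : Finset ℕ) (hG : IsGapset G) (hne : G.Nonempty) :
    gapDepth G = (Finset.Ico 1 (mult G)).sup (kunz G) := by
  obtain ⟨h0, hadd⟩ := hG
  set m := mult G with hmdef
  have hset : {s : ℕ | 0 < s ∧ s ∉ G}.Nonempty := by
    refine ⟨G.sup id + 1, Nat.succ_pos _, fun h => ?_⟩
    have h2 := Finset.le_sup (f := id) h
    simp only [id_eq] at h2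
    omega
  obtain ⟨hmpos, hmG⟩ : 0 < m ∧ m ∉ G := Nat.sInf_mem hset
  -- descend by m
  have hdesc : ∀ z ∈ G, m ≤ z → z - m ∈ G := by
    intro z hz hle
    have hne' : z ≠ m := fun h => hmG (h ▸ hz)
    have hlt : m < z := lt_of_le_of_ne hle (Ne.symm hne')
    rcases hadd z hz m (z - m) hmpos (by omega) (by omega) with h | h
    · exact absurd h hmG
    · exact h
  -- no element is divisible by m
  have hmod : ∀ z, z ∈ G → z % m ≠ 0 := by
    intro z
    induction z using Nat.strong_induction_on with
    | _ z ih =>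
      intro hz hz0
      have hzpos : 0 < z := Nat.pos_of_ne_zero (fun h => h0 (h ▸ hz))
      have hge : m ≤ z := Nat.le_of_dvd hzpos (Nat.dvd_of_mod_eq_zero hz0)
      have h1 : z - m ∈ G := hdesc z hz hge
      have hne' : z ≠ m := fun h => hmG (h ▸ hz)
      have h2 : (z - m) % m = 0 :=
        Nat.sub_mod_eq_zero_of_mod_eq (by rw [hz0, Nat.mod_self])
      exact ih (z - m) (by omega) h1 h2
  -- initial segments
  have hdescj : ∀ i, 0 < i → ∀ l j, j ≤ l → i + m * l ∈ G → i + m * j ∈ G := by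
    intro i hi l
    induction l with
    | zero => intro j hj h; simpa [Nat.le_zero.1 hj] using h
    | succ l ih =>
      intro j hj h
      rcases Nat.eq_or_lt_of_le hj with rfl | hlt
      · exact h
      · have hms : m * (l + 1) = m * l + m := by ring
        have h' : i + m * l ∈ G := by
          have hle : m ≤ i + m * (l + 1) := by omega
          have := hdesc _ h hle
          have heq : i + m * (l + 1) - m = i + m * l := by omega
          rwa [heq] at this
        exact ih j (by omega) h'
  have hinj : ∀ i, Function.Injective (fun j => i + m * j) := by
    intro i a b hab
    simp only at hab
    exact Nat.eq_of_mul_eq_mul_left hmpos (by omega)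
  have hup : ∀ i l, 0 < i → i < m → i + m * l ∈ G → l < kunz G i := by
    intro i l hi him h
    have hsub : (Finset.range (l+1)).image (fun j => i + m * j) ⊆
        G.filter (fun z => z % m = i) := by
      intro x hx
      simp only [Finset.mem_image, Finset.mem_range] at hx
      obtain ⟨j, hj, rfl⟩ := hx
      refine Finset.mem_filter.2 ⟨hdescj i hi l j (by omega) h, ?_⟩
      rw [Nat.add_mul_mod_self_left, Nat.mod_eq_of_lt him]
    have hc := Finset.card_le_card hsub
    rw [Finset.card_image_of_injective _ (hinj i), Finset.card_range] at hc
    simpa [kunz, ← hmdef] using hc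
  have hdown : ∀ i l, 0 < i → i < m → i + m * l ∉ G → kunz G i ≤ l := by
    intro i l hi him h
    have hsub : G.filter (fun z => z % m = i) ⊆
        (Finset.range l).image (fun j => i + m * j) := by
      intro z hz
      obtain ⟨hzG, hzm⟩ := Finset.mem_filter.1 hz
      have hz_eq : z = i + m * (z / m) := by
        have := Nat.div_add_mod z m
        omega
      refine Finset.mem_image.2 ⟨z / m, Finset.mem_range.2 ?_, hz_eq.symm⟩
      by_contra hge
      push_neg at hge
      exact h (hdescj i hi (z / m) l hge (hz_eq ▸ hzG))
    have hc := Finset.card_le_card hsub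
    rw [Finset.card_image_of_injective _ (hinj i), Finset.card_range] at hc
    simpa [kunz, ← hmdef] using hc
  have hiff : ∀ i l, 0 < i → i < m → (i + m * l ∈ G ↔ l < kunz G i) := by
    intro i l hi him
    constructor
    · exact hup i l hi him
    · intro hl
      by_contra h'
      exact absurd (hdown i l hi him h') (by omega)
  -- conductor
  set z0 := G.max' hne with hz0def
  have hz0G : z0 ∈ G := G.max'_mem hne
  have hcond : gapConductor G = z0 + 1 := by
    have hmem : (z0 + 1) ∈ {s : ℕ | 0 < s ∧ ∀ n : ℕ, s + n ∉ G} := by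
      refine ⟨Nat.succ_pos _, fun n hn => ?_⟩
      have := G.le_max' _ hn
      omega
    refine le_antisymm (Nat.sInf_le hmem) (le_csInf ⟨_, hmem⟩ ?_)
    rintro s ⟨hs, hsn⟩
    by_contra hlt
    push_neg at hlt
    have heq : s + (z0 - s) = z0 := by omega
    exact hsn (z0 - s) (by rw [heq]; exact hz0G)
  have hdepth : gapDepth G = z0 / m + 1 := by
    rw [gapDepth, hcond, ← hmdef]
    have heq : z0 + 1 + m - 1 = z0 + m := by omega
    rw [heq, Nat.add_div_right _ hmpos]
  -- the maximizing class
  have hi0pos : 0 < z0 % m := Nat.pos_of_ne_zero (hmod z0 hz0G)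
  have hi0lt : z0 % m < m := Nat.mod_lt _ hmpos
  have hz0eq : z0 = z0 % m + m * (z0 / m) := by
    have := Nat.div_add_mod z0 m
    omega
  have hk0 : kunz G (z0 % m) = z0 / m + 1 := by
    apply le_antisymm
    · apply hdown _ _ hi0pos hi0lt
      intro hc
      have := G.le_max' _ hc
      have hms : m * (z0 / m + 1) = m * (z0 / m) + m := by ring
      omega
    · have := hup (z0 % m) (z0 / m) hi0pos hi0lt (hz0eq ▸ hz0G)
      omega
  rw [hdepth]
  apply le_antisymm
  · rw [← hk0]
    exact Finset.le_sup (Finset.mem_Ico.2 ⟨hi0pos, hi0lt⟩)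
  · apply Finset.sup_le
    intro i hi
    obtain ⟨hi1, hi2⟩ := Finset.mem_Ico.1 hi
    rcases Nat.eq_zero_or_pos (kunz G i) with h | h
    · omega
    · have hmem : i + m * (kunz G i - 1) ∈ G :=
        (hiff i (kunz G i - 1) hi1 hi2).2 (by omega)
      have hle := G.le_max' _ hmem
      have h1 : (kunz G i - 1) * m ≤ z0 := by
        rw [Nat.mul_comm]
        exact le_trans (Nat.le_add_left _ _) hle
      have h2 : kunz G i - 1 ≤ z0 / m := (Nat.le_div_iff_mul_le hmpos).2 h1
      omega
end

section
/- Let G be a gapset with multiplicity m > 1, ratio r(G) := min{x ∉ G, x ∈ ℕ : x ≢ 0 (mod m)}, and level λ(G) := ⌊r(G)/m⌋. If (k_1, …, k_{m−1}) are the Kunz coordinates of G, then λ(G) = min{k_i : 1 ≤ i ≤ m−1}. -/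
lemma mult_mem (G : Finset ℕ) : 0 < mult G ∧ mult G ∉ G := by
  have hne : ∃ s, 0 < s ∧ s ∉ G := by
    have hb : ∀ n ∈ G, n ≤ G.sup id := fun n hn => Finset.le_sup (f := id) hn
    exact ⟨G.sup id + 1, Nat.succ_pos _, fun h => by have := hb _ h; omega⟩
  exact Nat.sInf_mem hne

lemma kunz_mem_iff (G : Finset ℕ) (hG : IsGapset G) (i : ℕ) (hi1 : 1 ≤ i)
    (hi2 : i < mult G) : ∀ t, (i + t * mult G ∈ G ↔ t < kunz G i) := by
  obtain ⟨hmpos, hmG⟩ := mult_mem G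
  set m := mult G with hmdef
  have hdown : ∀ z : ℕ, 0 < z → z + m ∈ G → z ∈ G := fun z hz h =>
    (hG.2 _ h z m hz hmpos rfl).resolve_right hmG
  have hkne : ∃ t, i + t * m ∉ G := by
    have hb : ∀ n ∈ G, n ≤ G.sup id := fun n hn => Finset.le_sup (f := id) hn
    refine ⟨G.sup id + 1, fun h => ?_⟩
    have h1 := hb _ h
    nlinarith
  set k := sInf {t | i + t * m ∉ G} with hkdef
  have hk_not : i + k * m ∉ G := Nat.sInf_mem hkne
  have hlt : ∀ t, t < k → i + t * m ∈ G := by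
    intro t ht
    by_contra h
    have h2 : k ≤ t := Nat.sInf_le (show t ∈ {t | i + t * m ∉ G} from h)
    omega
  have hge : ∀ t, k ≤ t → i + t * m ∉ G := by
    intro t
    induction t with
    | zero =>
        intro ht
        have hk0 : k = 0 := Nat.le_zero.mp ht
        rw [← hk0]; exact hk_not
    | succ n ih =>
        intro ht
        rcases Nat.lt_or_ge k (n + 1) with h | h
        · have hn := ih (by omega)
          intro hmem
          apply hn
          apply hdown _ (by positivity)
          have he : i + n * m + m = i + (n + 1) * m := by ring
          rw [he]; exact hmem
        · have hk1 : k = n + 1 := by omega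
          rw [← hk1]; exact hk_not
  have hiff : ∀ t, (i + t * m ∈ G ↔ t < k) := by
    intro t
    constructor
    · intro h; by_contra h'; exact hge t (by omega) h
    · exact hlt t
  have hfilter : G.filter (fun z => z % m = i) =
      (Finset.range k).image (fun t => i + t * m) := by
    ext z
    simp only [Finset.mem_filter, Finset.mem_image, Finset.mem_range]
    constructor
    · rintro ⟨hz, hmod⟩
      refine ⟨z / m, ?_, ?_⟩
      · rw [← (hiff (z / m))]
        have he : i + z / m * m = z := by
          conv_rhs => rw [← Nat.mod_add_div' z m]
          rw [hmod]
        rwa [he]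
      · conv_rhs => rw [← Nat.mod_add_div' z m]
        rw [hmod]
    · rintro ⟨t, ht, rfl⟩
      refine ⟨(hiff t).2 ht, ?_⟩
      rw [Nat.add_mul_mod_self_right, Nat.mod_eq_of_lt hi2]
  have hcard : kunz G i = k := by
    rw [kunz, ← hmdef, hfilter, Finset.card_image_of_injective _ ?_, Finset.card_range]
    intro a b hab
    simp only at hab
    have : a * m = b * m := by omega
    exact Nat.eq_of_mul_eq_mul_right hmpos this
  intro t
  rw [hcard]
  exact hiff t

theorem level_eq_min_kunz (G : Finset ℕ) (hG : IsGapset G) (hm : 1 < mult G) :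
    sInf {x : ℕ | x ∉ G ∧ ¬ mult G ∣ x} / mult G =
      (Finset.Ico 1 (mult G)).inf' (Finset.nonempty_Ico.mpr hm) (kunz G) := by
  obtain ⟨hmpos, hmG⟩ := mult_mem G
  set m := mult G with hmdef
  set K := (Finset.Ico 1 m).inf' (Finset.nonempty_Ico.mpr hm) (kunz G) with hKdef
  obtain ⟨i0, hi0mem, hi0⟩ := Finset.exists_mem_eq_inf' (Finset.nonempty_Ico.mpr hm) (kunz G)
  rw [Finset.mem_Ico] at hi0mem
  have hc_mem : i0 + K * m ∉ G ∧ ¬ m ∣ (i0 + K * m) := by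
    constructor
    · rw [kunz_mem_iff G hG i0 hi0mem.1 hi0mem.2, ← hi0]
      omega
    · intro hdvd
      have h0 : (i0 + K * m) % m = 0 := Nat.mod_eq_zero_of_dvd hdvd
      rw [Nat.add_mul_mod_self_right, Nat.mod_eq_of_lt hi0mem.2] at h0
      omega
  have hAne : {x : ℕ | x ∉ G ∧ ¬ m ∣ x}.Nonempty := ⟨_, hc_mem⟩
  obtain ⟨hvG, hvdvd⟩ := Nat.sInf_mem hAne
  set v := sInf {x : ℕ | x ∉ G ∧ ¬ m ∣ x} with hvdef
  have hvle : v ≤ i0 + K * m := Nat.sInf_le hc_mem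
  have hup : v / m ≤ K := by
    have h1 : v < (K + 1) * m := by
      have : (K + 1) * m = K * m + m := by ring
      omega
    exact Nat.lt_succ_iff.mp ((Nat.div_lt_iff_lt_mul hmpos).mpr h1)
  have hlow : K ≤ v / m := by
    have hi : v % m ≠ 0 := fun h => hvdvd (Nat.dvd_of_mod_eq_zero h)
    have hi2 : v % m < m := Nat.mod_lt _ hmpos
    have hv_eq : v % m + v / m * m = v := Nat.mod_add_div' v m
    have hiff := kunz_mem_iff G hG (v % m) (by omega) hi2 (v / m)
    rw [hv_eq] at hiff
    have h1 : kunz G (v % m) ≤ v / m := by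
      by_contra h
      exact hvG (hiff.mpr (by omega))
    have h2 : K ≤ kunz G (v % m) :=
      Finset.inf'_le _ (Finset.mem_Ico.mpr ⟨by omega, hi2⟩)
    omega
  show v / m = K
  omega
end

section
/- A tuple (k_1, …, k_{m−1}) ∈ ℕ^{m−1} (with each k_i ≥ 1) is the Kunz coordinate vector of some numerical semigroup with multiplicity m if and only if: k_i + k_j ≥ k_{i+j} for all 1 ≤ i ≤ j ≤ m−1 with i+j < m, and k_i + k_j + 1 ≥ k_{i+j−m} for all 1 ≤ i ≤ j ≤ m−1 with i+j > m. -/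
noncomputable def multS (S : Set ℕ) : ℕ := sInf {s : ℕ | s ∈ S ∧ 0 < s}

noncomputable def kunzS (S : Set ℕ) (i : ℕ) : ℕ := (sInf {s : ℕ | s ∈ S ∧ s % multS S = i} - i) / multS S

private lemma kunz_closure_aux (m : ℕ) (hm : 2 ≤ m) (k : ℕ → ℕ)
    (hK1 : ∀ i j : ℕ, 1 ≤ i → i ≤ j → j ≤ m - 1 → i + j < m → k (i + j) ≤ k i + k j)
    (hK2 : ∀ i j : ℕ, 1 ≤ i → i ≤ j → j ≤ m - 1 → m < i + j → k (i + j - m) ≤ k i + k j + 1)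
    (a b : ℕ) (ha : a % m = 0 ∨ k (a % m) ≤ a / m) (hb : b % m = 0 ∨ k (b % m) ≤ b / m) :
    (a + b) % m = 0 ∨ k ((a + b) % m) ≤ (a + b) / m := by
  have hm0 : 0 < m := by omega
  have hra : a % m < m := Nat.mod_lt _ hm0
  have hrb : b % m < m := Nat.mod_lt _ hm0
  have hda : a = m * (a / m) + a % m := (Nat.div_add_mod a m).symm
  have hdb : b = m * (b / m) + b % m := (Nat.div_add_mod b m).symm
  generalize hqa : a / m = qa at *
  generalize hra0 : a % m = ra at *
  generalize hqb : b / m = qb at *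
  generalize hrb0 : b % m = rb at *
  rcases Nat.lt_or_ge (ra + rb) m with hcase | hcase
  · -- no carry
    have hab : a + b = (ra + rb) + m * (qa + qb) := by rw [mul_add]; omega
    have hmod : (a + b) % m = ra + rb := by
      rw [hab, Nat.add_mul_mod_self_left, Nat.mod_eq_of_lt hcase]
    have hdiv : (a + b) / m = qa + qb := by
      rw [hab, Nat.add_mul_div_left _ _ hm0, Nat.div_eq_of_lt hcase, Nat.zero_add]
    rw [hmod, hdiv]
    rcases Nat.eq_zero_or_pos ra with hz | hpa
    · subst hz
      rcases Nat.eq_zero_or_pos rb with hz2 | hpb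
      · subst hz2; left; rfl
      · right
        have hkb : k rb ≤ qb := hb.resolve_left (by omega)
        simpa using by omega
    · rcases Nat.eq_zero_or_pos rb with hz2 | hpb
      · subst hz2
        right
        have hka : k ra ≤ qa := ha.resolve_left (by omega)
        simpa using by omega
      · right
        have hka : k ra ≤ qa := ha.resolve_left (by omega)
        have hkb : k rb ≤ qb := hb.resolve_left (by omega)
        have hsum : k (ra + rb) ≤ k ra + k rb := by
          rcases le_total ra rb with hle | hle
          · exact hK1 ra rb hpa hle (by omega) hcase
          · have := hK1 rb ra hpb hle (by omega) (by omega)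
            rw [Nat.add_comm rb ra] at this
            omega
        omega
  · rcases Nat.eq_or_lt_of_le hcase with heq | hlt
    · -- ra + rb = m
      left
      have hab : a + b = m * (qa + qb + 1) := by
        rw [mul_add, mul_add, mul_one]; omega
      rw [hab, Nat.mul_mod_right]
    · -- carry
      have hpa : 0 < ra := by omega
      have hpb : 0 < rb := by omega
      have hka : k ra ≤ qa := ha.resolve_left (by omega)
      have hkb : k rb ≤ qb := hb.resolve_left (by omega)
      have hab : a + b = (ra + rb - m) + m * (qa + qb + 1) := by
        rw [mul_add, mul_add, mul_one]; omega
      have hmod : (a + b) % m = ra + rb - m := by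
        rw [hab, Nat.add_mul_mod_self_left, Nat.mod_eq_of_lt (by omega)]
      have hdiv : (a + b) / m = qa + qb + 1 := by
        rw [hab, Nat.add_mul_div_left _ _ hm0, Nat.div_eq_of_lt (by omega), Nat.zero_add]
      right
      rw [hmod, hdiv]
      have hsum : k (ra + rb - m) ≤ k ra + k rb + 1 := by
        rcases le_total ra rb with hle | hle
        · exact hK2 ra rb hpa hle (by omega) hlt
        · have := hK2 rb ra hpb hle (by omega) (by omega)
          rw [Nat.add_comm rb ra] at this
          omega
      omega

theorem kunz_characterization (m : ℕ) (hm : 2 ≤ m) (k : ℕ → ℕ)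
    (hk : ∀ i : ℕ, 1 ≤ i → i ≤ m - 1 → 1 ≤ k i) :
    (∃ S : Set ℕ, IsNumSgp S ∧ multS S = m ∧
        ∀ i : ℕ, 1 ≤ i → i ≤ m - 1 → kunzS S i = k i) ↔ KunzIneq m k := by
  have hm0 : 0 < m := by omega
  constructor
  · rintro ⟨S, ⟨h0, hadd, hfin⟩, hmult, hkS⟩
    obtain ⟨b, hb⟩ : ∃ b, ∀ x ∈ Sᶜ, x ≤ b := hfin.bddAbove
    have hbig : ∀ n, b < n → n ∈ S := by
      intro n hn
      by_contra h
      exact absurd (hb n h) (by omega)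
    have hne : ∀ i, i < m → {s : ℕ | s ∈ S ∧ s % m = i}.Nonempty := by
      intro i hi
      refine ⟨i + m * (b + 1), hbig _ ?_, ?_⟩
      · have : b + 1 ≤ m * (b + 1) := Nat.le_mul_of_pos_left _ hm0
        omega
      · simp [Nat.add_mul_mod_self_left, Nat.mod_eq_of_lt hi]
    set w : ℕ → ℕ := fun i => sInf {s : ℕ | s ∈ S ∧ s % m = i} with hwdef
    have hwa : ∀ i, sInf {s : ℕ | s ∈ S ∧ s % m = i} = w i := fun _ => rfl
    have hwmem : ∀ i, i < m → w i ∈ S ∧ w i % m = i := fun i hi => Nat.sInf_mem (hne i hi)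
    have hw : ∀ i, 1 ≤ i → i ≤ m - 1 → w i = m * k i + i := by
      intro i h1 h2
      have him : i < m := by omega
      have hmod := (hwmem i him).2
      have hdm := Nat.div_add_mod (w i) m
      have hthis := hkS i h1 h2
      rw [kunzS, hmult, hwa i] at hthis
      have hsub : w i - i = m * (w i / m) := by omega
      rw [hsub, Nat.mul_div_cancel_left _ hm0] at hthis
      rw [← hthis]
      omega
    have hle : ∀ i j, 1 ≤ i → i < m → 1 ≤ j → j < m → w ((i + j) % m) ≤ w i + w j := by
      intro i j hi1 hi2 hj1 hj2
      have hs : w i + w j ∈ S := hadd _ (hwmem i hi2).1 _ (hwmem j hj2).1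
      have hmod : (w i + w j) % m = (i + j) % m := by
        rw [Nat.add_mod, (hwmem i hi2).2, (hwmem j hj2).2]
      rw [← hwa]
      exact Nat.sInf_le ⟨hs, hmod⟩
    constructor
    · intro i j hi hij hj hsum
      have h1i : 1 ≤ j := le_trans hi hij
      have him : i < m := by omega
      have hjm : j < m := by omega
      have hwle := hle i j hi him h1i hjm
      rw [Nat.mod_eq_of_lt hsum] at hwle
      rw [hw i hi (by omega), hw j h1i hj, hw (i + j) (by omega) (by omega)] at hwle
      by_contra hcon
      push_neg at hcon
      have hmul : m * (k i + k j + 1) ≤ m * k (i + j) := Nat.mul_le_mul_left m hcon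
      rw [mul_add, mul_add, mul_one] at hmul
      omega
    · intro i j hi hij hj hsum
      have h1i : 1 ≤ j := le_trans hi hij
      have him : i < m := by omega
      have hjm : j < m := by omega
      have hwle := hle i j hi him h1i hjm
      have hmod : (i + j) % m = i + j - m := by
        rw [Nat.mod_eq_sub_mod (le_of_lt hsum), Nat.mod_eq_of_lt (by omega)]
      rw [hmod] at hwle
      rw [hw i hi (by omega), hw j h1i hj, hw (i + j - m) (by omega) (by omega)] at hwle
      by_contra hcon
      push_neg at hcon
      have hmul : m * (k i + k j + 2) ≤ m * k (i + j - m) := Nat.mul_le_mul_left m hcon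
      rw [mul_add, mul_add] at hmul
      omega
  · rintro ⟨hK1, hK2⟩
    set S : Set ℕ := {n | n % m = 0 ∨ k (n % m) ≤ n / m} with hSdef
    have hmemS : ∀ n, n ∈ S ↔ (n % m = 0 ∨ k (n % m) ≤ n / m) := fun n => Iff.rfl
    have hclosed : ∀ a ∈ S, ∀ b ∈ S, a + b ∈ S := by
      intro a ha b hb
      exact (hmemS _).mpr (kunz_closure_aux m hm k hK1 hK2 a b ((hmemS _).mp ha) ((hmemS _).mp hb))
    have hcofin : Sᶜ.Finite := by
      set K := (Finset.range m).sup k with hK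
      apply Set.Finite.subset (Set.finite_Iio (m * (K + 1)))
      intro n hn
      simp only [Set.mem_Iio]
      by_contra hge
      push_neg at hge
      apply hn
      right
      have h1 : k (n % m) ≤ K := Finset.le_sup (Finset.mem_range.mpr (Nat.mod_lt _ hm0))
      have h2 : K + 1 ≤ n / m := (Nat.le_div_iff_mul_le hm0).mpr (by rwa [Nat.mul_comm] at hge)
      omega
    have hmS : multS S = m := by
      have hmin : m ∈ S := Or.inl (Nat.mod_self m)
      have hle : multS S ≤ m := Nat.sInf_le ⟨hmin, hm0⟩
      have hge : ∀ s, s ∈ S → 0 < s → m ≤ s := by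
        intro s hs hpos
        by_contra h
        push_neg at h
        have hmod : s % m = s := Nat.mod_eq_of_lt h
        rcases hs with h1 | h1
        · omega
        · rw [hmod] at h1
          have hk1 := hk s hpos (by omega)
          have : s / m = 0 := Nat.div_eq_of_lt h
          omega
      have hmem := Nat.sInf_mem (⟨m, hmin, hm0⟩ : {s : ℕ | s ∈ S ∧ 0 < s}.Nonempty)
      have := hge _ hmem.1 hmem.2
      unfold multS at *
      omega
    refine ⟨S, ⟨Or.inl (Nat.zero_mod m), hclosed, hcofin⟩, hmS, ?_⟩
    intro i hi1 hi2
    have him : i < m := by omega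
    have hImem : m * k i + i ∈ {s : ℕ | s ∈ S ∧ s % multS S = i} := by
      have hmod : (m * k i + i) % m = i := by
        rw [Nat.mul_add_mod, Nat.mod_eq_of_lt him]
      have hdiv : (m * k i + i) / m = k i := by
        rw [Nat.mul_add_div hm0, Nat.div_eq_of_lt him, Nat.add_zero]
      refine ⟨?_, by rw [hmS]; exact hmod⟩
      right
      rw [hmod, hdiv]
    have hlb : ∀ s ∈ {s : ℕ | s ∈ S ∧ s % multS S = i}, m * k i + i ≤ s := by
      rintro s ⟨hs, hmod⟩
      rw [hmS] at hmod
      have hd := Nat.div_add_mod s m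
      rcases hs with h | h
      · omega
      · rw [hmod] at h
        have : m * k i ≤ m * (s / m) := Nat.mul_le_mul_left m h
        omega
    have hInf : sInf {s : ℕ | s ∈ S ∧ s % multS S = i} = m * k i + i := by
      apply le_antisymm (Nat.sInf_le hImem)
      exact hlb _ (Nat.sInf_mem ⟨_, hImem⟩)
    rw [kunzS, hInf, hmS, Nat.add_sub_cancel, Nat.mul_div_cancel_left _ hm0]
end

section
/- Let ℓ ≥ 1 and let (k_1, …, k_{m−1}) be a tuple of integers with each k_i ∈ [ℓ, 2ℓ+1] satisfying the Kunz inequalities for multiplicity m. Then for any z ∈ [ℓ, 2ℓ], the extended tuple (k_1, …, k_{m−1}, z) satisfies the Kunz inequalities for multiplicity m+1. -/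
theorem kunz_extend (m l : ℕ) (hm : 1 ≤ m) (hl : 1 ≤ l) (k : ℕ → ℕ)
    (hk : ∀ i : ℕ, 1 ≤ i → i ≤ m - 1 → k i ∈ Set.Icc l (2 * l + 1))
    (hK : KunzIneq m k) (z : ℕ) (hz : z ∈ Set.Icc l (2 * l)) :
    KunzIneq (m + 1) (fun i => if i = m then z else k i) := by
  obtain ⟨hz1, hz2⟩ := hz
  obtain ⟨h1, h2⟩ := hK
  constructor
  · intro i j hi hij hj hlt
    simp only
    by_cases hijm : i + j = m
    · obtain ⟨hki1, hki2⟩ := hk i hi (by omega)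
      obtain ⟨hkj1, hkj2⟩ := hk j (by omega) (by omega)
      rw [if_pos hijm, if_neg (by omega), if_neg (by omega)]
      omega
    · have := h1 i j hi hij (by omega) (by omega)
      rw [if_neg (by omega), if_neg (by omega), if_neg (by omega)]
      exact this
  · intro i j hi hij hj hgt
    simp only
    obtain ⟨hkt1, hkt2⟩ := hk (i + j - (m + 1)) (by omega) (by omega)
    have hki : l ≤ (if i = m then z else k i) := by
      by_cases h : i = m
      · rw [if_pos h]; exact hz1
      · rw [if_neg h]; exact (hk i hi (by omega)).1
    have hkj : l ≤ (if j = m then z else k j) := by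
      by_cases h : j = m
      · rw [if_pos h]; exact hz1
      · rw [if_neg h]; exact (hk j (by omega) (by omega)).1
    rw [if_neg (by omega)]
    omega
end

section
/- Let ℓ ≥ 1 and let (k_1, …, k_m) be a tuple of integers with each k_i ∈ [ℓ, 2ℓ+1] satisfying the Kunz inequalities for multiplicity m+1. Then the truncated tuple (k_1, …, k_{m−1}) satisfies the Kunz inequalities for multiplicity m. -/
theorem kunz_truncate (m l : ℕ) (hl : 1 ≤ l) (k : ℕ → ℕ)
    (hk : ∀ i : ℕ, 1 ≤ i → i ≤ m → k i ∈ Set.Icc l (2 * l + 1))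
    (hK : KunzIneq (m + 1) k) :
    KunzIneq m k := by
  constructor
  · intro i j hi hij hj hlt
    exact hK.1 i j hi hij (by omega) (by omega)
  · intro i j hi hij hj hlt
    have h1 := hk i hi (by omega)
    have h2 := hk j (by omega) (by omega)
    have h3 := hk (i + j - m) (by omega) (by omega)
    simp only [Set.mem_Icc] at h1 h2 h3
    omega
end

section
/- For positive integers g and ℓ, let n'_{g,ℓ} denote the number of gapsets of genus g all of whose Kunz coordinates lie in [ℓ, 2ℓ+1]. Then n'_{g,ℓ} ≥ Σ_{i=ℓ}^{2ℓ} n'_{g−i,ℓ}. -/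
def Gamma' (g l : ℕ) : Set (Finset ℕ) :=
  {G : Finset ℕ | IsGapset G ∧ G.card = g ∧
    ∀ i : ℕ, 1 ≤ i → i < mult G → kunz G i ∈ Set.Icc l (2 * l + 1)}

noncomputable def n' (g : ℤ) (l : ℕ) : ℕ := if g < 0 then 0 else (Gamma' g.toNat l).ncard

set_option linter.unusedSectionVars false

open Finset

lemma mult_mem_set (G : Finset ℕ) : mult G ∈ {s : ℕ | 0 < s ∧ s ∉ G} := by
  apply Nat.sInf_mem
  refine ⟨G.sup id + 1, Nat.succ_pos _, fun h => ?_⟩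
  have := Finset.le_sup (f := id) h
  simp only [id] at this
  omega

lemma mult_pos (G : Finset ℕ) : 0 < mult G := (mult_mem_set G).1

lemma mult_not_mem (G : Finset ℕ) : mult G ∉ G := (mult_mem_set G).2

lemma mem_of_lt_mult {G : Finset ℕ} {r : ℕ} (h0 : 0 < r) (h : r < mult G) : r ∈ G := by
  by_contra hr
  have : mult G ≤ r := Nat.sInf_le (And.intro h0 hr)
  omega

-- downward closure
lemma down {G : Finset ℕ} (hG : IsGapset G) {x : ℕ} (hx : 0 < x)
    (h : x + mult G ∈ G) : x ∈ G := by
  rcases hG.2 _ h x (mult G) hx (mult_pos G) rfl with h' | h'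
  · exact h'
  · exact absurd h' (mult_not_mem G)

lemma mul_not_mem {G : Finset ℕ} (hG : IsGapset G) (a : ℕ) : a * mult G ∉ G := by
  induction a with
  | zero => simpa using hG.1
  | succ n ih =>
    intro h
    rcases Nat.eq_zero_or_pos n with rfl | hn
    · simp at h; exact mult_not_mem G h
    · refine ih (down hG (Nat.mul_pos hn (mult_pos G)) ?_)
      rwa [Nat.succ_mul] at h

lemma down_iter {G : Finset ℕ} (hG : IsGapset G) {r : ℕ} (hr : 0 < r) :
    ∀ a b : ℕ, b ≤ a → a * mult G + r ∈ G → b * mult G + r ∈ G := by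
  intro a
  induction a with
  | zero =>
    intro b hb h
    obtain rfl : b = 0 := Nat.le_zero.mp hb
    exact h
  | succ n ih =>
    intro b hb h
    rcases Nat.eq_or_lt_of_le hb with rfl | hb'
    · exact h
    · refine ih b (by omega) (down hG (by positivity) ?_)
      rwa [Nat.succ_mul, add_right_comm] at h

lemma mem_iff_lt_kunz {G : Finset ℕ} (hG : IsGapset G) {r : ℕ} (hr : 0 < r)
    (hrm : r < mult G) (a : ℕ) : a * mult G + r ∈ G ↔ a < kunz G r := by
  have hm : 0 < mult G := mult_pos G
  constructor
  · intro h
    have hsub : (Finset.range (a+1)).image (fun b => b * mult G + r) ⊆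
        G.filter (fun z => z % mult G = r) := by
      intro z hz
      simp only [Finset.mem_image, Finset.mem_range] at hz
      obtain ⟨b, hb, rfl⟩ := hz
      refine Finset.mem_filter.2 ⟨down_iter hG hr a b (by omega) h, ?_⟩
      rw [add_comm, Nat.add_mul_mod_self_right, Nat.mod_eq_of_lt hrm]
    have hcard := Finset.card_le_card hsub
    rw [Finset.card_image_of_injective _ (fun b c hbc => by
      have hbc' : b * mult G + r = c * mult G + r := hbc
      have : b * mult G = c * mult G := by omega
      exact Nat.eq_of_mul_eq_mul_right hm this), Finset.card_range] at hcard
    unfold kunz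
    omega
  · intro h
    by_contra hmem
    have hsub : G.filter (fun z => z % mult G = r) ⊆
        (Finset.range a).image (fun b => b * mult G + r) := by
      intro z hz
      rw [Finset.mem_filter] at hz
      obtain ⟨hzG, hzr⟩ := hz
      have hzeq : z / mult G * mult G + r = z := by
        conv_rhs => rw [← Nat.div_add_mod z (mult G)]
        rw [hzr, Nat.mul_comm]
      have hlt : z / mult G < a := by
        by_contra hge
        exact hmem (down_iter hG hr (z / mult G) a (by omega) (by rwa [hzeq]))
      exact Finset.mem_image.2 ⟨z / mult G, Finset.mem_range.2 hlt, hzeq⟩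
    have := (Finset.card_le_card hsub).trans (Finset.card_image_le)
    rw [Finset.card_range] at this
    unfold kunz at h
    omega

lemma mem_char {G : Finset ℕ} (hG : IsGapset G) (x : ℕ) :
    x ∈ G ↔ (x % mult G ≠ 0 ∧ x / mult G < kunz G (x % mult G)) := by
  have hm : 0 < mult G := mult_pos G
  rcases Nat.eq_zero_or_pos (x % mult G) with h0 | h0
  · simp only [h0, ne_eq, not_true_eq_false, false_and, iff_false]
    intro hx
    have heq : x / mult G * mult G + x % mult G = x := Nat.div_add_mod' x (mult G)
    have : x / mult G * mult G = x := by omega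
    rw [← this] at hx
    exact mul_not_mem hG (x / mult G) hx
  · have heq : x / mult G * mult G + x % mult G = x := Nat.div_add_mod' x (mult G)
    conv_lhs => rw [← heq]
    rw [mem_iff_lt_kunz hG h0 (Nat.mod_lt _ hm) (x / mult G)]
    simp [Nat.pos_iff_ne_zero.mp h0]

lemma card_eq_sum_kunz {G : Finset ℕ} (hG : IsGapset G) :
    G.card = ∑ r ∈ Finset.Icc 1 (mult G - 1), kunz G r := by
  rw [Finset.card_eq_sum_card_fiberwise (f := fun z => z % mult G)
    (t := Finset.Icc 1 (mult G - 1))]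
  · rfl
  · intro z hz
    have h1 := (mem_char hG z).1 hz
    have h2 : z % mult G < mult G := Nat.mod_lt _ (mult_pos G)
    simp only [Finset.mem_coe, Finset.mem_Icc]
    omega

lemma compl_add {G : Finset ℕ} (hG : IsGapset G) {a b : ℕ} (ha : a ∉ G) (hb : b ∉ G) :
    a + b ∉ G := by
  intro h
  rcases Nat.eq_zero_or_pos a with rfl | ha'
  · simp at h; exact hb h
  rcases Nat.eq_zero_or_pos b with rfl | hb'
  · simp at h; exact ha h
  rcases hG.2 _ h a b ha' hb' rfl with h' | h'
  · exact ha h'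
  · exact hb h'

lemma kunz_subadd {G : Finset ℕ} (hG : IsGapset G) {r s : ℕ} (hr : 0 < r) (hs : 0 < s)
    (hrs : r + s < mult G) : kunz G (r + s) ≤ kunz G r + kunz G s := by
  have hm : 0 < mult G := mult_pos G
  have ha : kunz G r * mult G + r ∉ G := by
    rw [mem_iff_lt_kunz hG hr (by omega)]; omega
  have hb : kunz G s * mult G + s ∉ G := by
    rw [mem_iff_lt_kunz hG hs (by omega)]; omega
  have hab := compl_add hG ha hb
  have heq : (kunz G r * mult G + r) + (kunz G s * mult G + s)
      = (kunz G r + kunz G s) * mult G + (r + s) := by ring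
  rw [heq, mem_iff_lt_kunz hG (by omega) hrs] at hab
  omega

noncomputable def nk (G : Finset ℕ) (i : ℕ) : ℕ → ℕ :=
  fun r => if r = mult G then i else kunz G r

noncomputable def gext (G : Finset ℕ) (i l : ℕ) : Finset ℕ :=
  (Finset.range ((2 * l + 2) * (mult G + 1))).filter
    (fun x => x % (mult G + 1) ≠ 0 ∧ x / (mult G + 1) < nk G i (x % (mult G + 1)))

section construction

variable {G : Finset ℕ} {i l : ℕ}

-- hypotheses bundle
variable (hG : IsGapset G) (hl : 0 < l)
  (hk : ∀ r : ℕ, 1 ≤ r → r < mult G → kunz G r ∈ Set.Icc l (2 * l + 1))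
  (hi1 : l ≤ i) (hi2 : i ≤ 2 * l)

include hk hi1 hi2 in
lemma nk_bounds : ∀ r : ℕ, 1 ≤ r → r ≤ mult G → l ≤ nk G i r ∧ nk G i r ≤ 2 * l + 1 := by
  intro r h1 h2
  unfold nk
  split
  · omega
  · have := hk r h1 (by omega)
    simp only [Set.mem_Icc] at this
    omega

include hk hi1 hi2 in
lemma mem_ext {x : ℕ} : x ∈ gext G i l ↔
    x % (mult G + 1) ≠ 0 ∧ x / (mult G + 1) < nk G i (x % (mult G + 1)) := by
  unfold gext
  rw [Finset.mem_filter, Finset.mem_range, and_iff_right_iff_imp]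
  rintro ⟨h0, hdiv⟩
  have hm' : 0 < mult G + 1 := Nat.succ_pos _
  have hmod : x % (mult G + 1) < mult G + 1 := Nat.mod_lt _ hm'
  have hb := (nk_bounds hk hi1 hi2 (x % (mult G + 1)) (by omega) (by omega)).2
  exact (Nat.div_lt_iff_lt_mul hm').mp (by omega)

include hk hi1 hi2 in
lemma ext_lower {x : ℕ} (hx : x ∉ gext G i l) (h0 : x % (mult G + 1) ≠ 0) :
    nk G i (x % (mult G + 1)) * (mult G + 1) + x % (mult G + 1) ≤ x := by
  rw [mem_ext hk hi1 hi2] at hx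
  have hdm := Nat.div_add_mod' x (mult G + 1)
  have : nk G i (x % (mult G + 1)) * (mult G + 1) ≤ x / (mult G + 1) * (mult G + 1) :=
    Nat.mul_le_mul_right _ (by omega)
  omega

include hk hi1 hi2 in
lemma ext_upper {x : ℕ} (hx : x ∈ gext G i l) :
    x % (mult G + 1) ≠ 0 ∧ x < nk G i (x % (mult G + 1)) * (mult G + 1) := by
  rw [mem_ext hk hi1 hi2] at hx
  exact ⟨hx.1, (Nat.div_lt_iff_lt_mul (Nat.succ_pos _)).mp hx.2⟩

include hG hk hi1 hi2 in
lemma nk_kunz_ineq : ∀ r s : ℕ, 1 ≤ r → 1 ≤ s → r + s ≤ mult G →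
    nk G i (r + s) ≤ nk G i r + nk G i s := by
  intro r s hr hs hrs
  have hbr := nk_bounds hk hi1 hi2 r hr (by omega)
  have hbs := nk_bounds hk hi1 hi2 s hs (by omega)
  rcases Nat.eq_or_lt_of_le hrs with heq | hlt
  · have : nk G i (r + s) = i := by unfold nk; simp [heq]
    omega
  · have h1 : nk G i (r + s) = kunz G (r + s) := by unfold nk; split; omega; rfl
    have h2 : nk G i r = kunz G r := by unfold nk; split; omega; rfl
    have h3 : nk G i s = kunz G s := by unfold nk; split; omega; rfl
    rw [h1, h2, h3]
    exact kunz_subadd hG (by omega) (by omega) hlt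

include hG hk hi1 hi2 in
lemma gext_gapset : IsGapset (gext G i l) := by
  have hm' : 0 < mult G + 1 := Nat.succ_pos _
  constructor
  · intro h
    have := (ext_upper hk hi1 hi2 h).1
    simp at this
  · intro z hz x y hx hy hxy
    by_contra hcon
    push_neg at hcon
    obtain ⟨hxG, hyG⟩ := hcon
    obtain ⟨hz0, hzub⟩ := ext_upper hk hi1 hi2 hz
    have hzmod : z % (mult G + 1) = (x % (mult G + 1) + y % (mult G + 1)) % (mult G + 1) := by
      rw [← hxy, Nat.add_mod]
    have hxlt : x % (mult G + 1) < mult G + 1 := Nat.mod_lt _ hm'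
    have hylt : y % (mult G + 1) < mult G + 1 := Nat.mod_lt _ hm'
    rcases Nat.eq_zero_or_pos (x % (mult G + 1)) with hr0 | hr
    · rcases Nat.eq_zero_or_pos (y % (mult G + 1)) with hs0 | hs
      · rw [hr0, hs0] at hzmod
        simp at hzmod
        exact hz0 hzmod
      · have hy' := ext_lower hk hi1 hi2 hyG (by omega)
        have hzy : z % (mult G + 1) = y % (mult G + 1) := by
          rw [hzmod, hr0, Nat.zero_add, Nat.mod_mod_of_dvd _ dvd_rfl]
        rw [hzy] at hzub
        omega
    rcases Nat.eq_zero_or_pos (y % (mult G + 1)) with hs0 | hs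
    · have hx' := ext_lower hk hi1 hi2 hxG (by omega)
      have hzx : z % (mult G + 1) = x % (mult G + 1) := by
        rw [hzmod, hs0, Nat.add_zero, Nat.mod_mod_of_dvd _ dvd_rfl]
      rw [hzx] at hzub
      omega
    have hx' := ext_lower hk hi1 hi2 hxG (by omega)
    have hy' := ext_lower hk hi1 hi2 hyG (by omega)
    rcases lt_trichotomy (x % (mult G + 1) + y % (mult G + 1)) (mult G + 1) with h1 | h1 | h1
    · have ht : z % (mult G + 1) = x % (mult G + 1) + y % (mult G + 1) := by
        rw [hzmod, Nat.mod_eq_of_lt h1]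
      have hk1 := nk_kunz_ineq hG hk hi1 hi2 (x % (mult G + 1)) (y % (mult G + 1))
        (by omega) (by omega) (by omega)
      rw [ht] at hzub
      have hmul : nk G i (x % (mult G + 1) + y % (mult G + 1)) * (mult G + 1)
          ≤ (nk G i (x % (mult G + 1)) + nk G i (y % (mult G + 1))) * (mult G + 1) :=
        Nat.mul_le_mul_right _ hk1
      rw [add_mul] at hmul
      omega
    · have : z % (mult G + 1) = 0 := by rw [hzmod, h1, Nat.mod_self]
      exact hz0 this
    · have ht : z % (mult G + 1) = x % (mult G + 1) + y % (mult G + 1) - (mult G + 1) := by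
        rw [hzmod, Nat.mod_eq_sub_mod (by omega), Nat.mod_eq_of_lt (by omega)]
      have hbt := nk_bounds hk hi1 hi2 (x % (mult G + 1) + y % (mult G + 1) - (mult G + 1))
        (by omega) (by omega)
      have hbr := nk_bounds hk hi1 hi2 (x % (mult G + 1)) (by omega) (by omega)
      have hbs := nk_bounds hk hi1 hi2 (y % (mult G + 1)) (by omega) (by omega)
      have hmul : nk G i (x % (mult G + 1) + y % (mult G + 1) - (mult G + 1)) * (mult G + 1)
          ≤ (nk G i (x % (mult G + 1)) + nk G i (y % (mult G + 1)) + 1) * (mult G + 1) :=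
        Nat.mul_le_mul_right _ (by omega)
      rw [add_mul, add_mul, one_mul] at hmul
      rw [ht] at hzub
      omega

include hl hk hi1 hi2 in
lemma gext_mult : mult (gext G i l) = mult G + 1 := by
  have h1 : ∀ r, 0 < r → r < mult G + 1 → r ∈ gext G i l := by
    intro r h0 hr
    rw [mem_ext hk hi1 hi2, Nat.mod_eq_of_lt hr, Nat.div_eq_of_lt hr]
    have := (nk_bounds hk hi1 hi2 r (by omega) (by omega)).1
    exact ⟨by omega, by omega⟩
  have h2 : mult G + 1 ∉ gext G i l := by
    rw [mem_ext hk hi1 hi2, Nat.mod_self]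
    simp
  have h3 : mult (gext G i l) ≤ mult G + 1 :=
    Nat.sInf_le (And.intro (Nat.succ_pos _) h2)
  have h4 := mult_mem_set (gext G i l)
  by_contra hne
  exact h4.2 (h1 _ h4.1 (by omega))

include hk hi1 hi2 in
lemma gext_filter {r : ℕ} (h1 : 1 ≤ r) (h2 : r ≤ mult G) :
    (gext G i l).filter (fun z => z % (mult G + 1) = r)
      = (Finset.range (nk G i r)).image (fun b => b * (mult G + 1) + r) := by
  have hm' : 0 < mult G + 1 := Nat.succ_pos _
  ext z
  rw [Finset.mem_filter, mem_ext hk hi1 hi2, Finset.mem_image]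
  constructor
  · rintro ⟨⟨h0, hdiv⟩, hzr⟩
    refine ⟨z / (mult G + 1), Finset.mem_range.2 (hzr ▸ hdiv), ?_⟩
    have := Nat.div_add_mod' z (mult G + 1)
    omega
  · rintro ⟨b, hb, rfl⟩
    rw [Finset.mem_range] at hb
    have hmod : (b * (mult G + 1) + r) % (mult G + 1) = r := by
      rw [add_comm, Nat.add_mul_mod_self_right, Nat.mod_eq_of_lt (by omega)]
    have hdiv : (b * (mult G + 1) + r) / (mult G + 1) = b := by
      rw [add_comm, Nat.add_mul_div_right _ _ hm', Nat.div_eq_of_lt (by omega), Nat.zero_add]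
    exact ⟨⟨by rw [hmod]; omega, by rw [hdiv, hmod]; exact hb⟩, hmod⟩

include hl hk hi1 hi2 in
lemma gext_kunz {r : ℕ} (h1 : 1 ≤ r) (h2 : r ≤ mult G) :
    kunz (gext G i l) r = nk G i r := by
  unfold kunz
  simp only [gext_mult hl hk hi1 hi2]
  rw [gext_filter hk hi1 hi2 h1 h2, Finset.card_image_of_injective, Finset.card_range]
  intro b c hbc
  simp only at hbc
  have : b * (mult G + 1) = c * (mult G + 1) := by omega
  exact Nat.eq_of_mul_eq_mul_right (Nat.succ_pos _) this

include hG hl hk hi1 hi2 in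
lemma gext_card : (gext G i l).card = G.card + i := by
  obtain ⟨m0, hm0⟩ : ∃ m0, mult G = m0 + 1 := ⟨mult G - 1, by have := mult_pos G; omega⟩
  rw [card_eq_sum_kunz (gext_gapset hG hk hi1 hi2), gext_mult hl hk hi1 hi2]
  simp only [Nat.add_sub_cancel]
  have hsum : ∑ r ∈ Finset.Icc 1 (mult G), kunz (gext G i l) r
      = ∑ r ∈ Finset.Icc 1 (mult G), nk G i r := by
    refine Finset.sum_congr rfl (fun r hr => ?_)
    rw [Finset.mem_Icc] at hr
    exact gext_kunz hl hk hi1 hi2 hr.1 hr.2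
  have hlast : nk G i (m0 + 1) = i := by unfold nk; rw [hm0]; simp
  have hrest : ∑ r ∈ Finset.Icc 1 m0, nk G i r = ∑ r ∈ Finset.Icc 1 m0, kunz G r := by
    refine Finset.sum_congr rfl (fun r hr => ?_)
    rw [Finset.mem_Icc] at hr
    unfold nk
    split
    · omega
    · rfl
  have hcard := card_eq_sum_kunz hG
  rw [hm0, Nat.add_sub_cancel] at hcard
  rw [hsum, hm0, Finset.sum_Icc_succ_top (by omega), hlast, hrest, ← hcard]

include hG hl hk hi1 hi2 in
lemma gext_kunz_range : ∀ r : ℕ, 1 ≤ r → r < mult (gext G i l) →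
    kunz (gext G i l) r ∈ Set.Icc l (2 * l + 1) := by
  intro r h1 h2
  rw [gext_mult hl hk hi1 hi2] at h2
  rw [gext_kunz hl hk hi1 hi2 h1 (by omega)]
  have := nk_bounds hk hi1 hi2 r h1 (by omega)
  exact Set.mem_Icc.2 ⟨this.1, this.2⟩

include hl hk hi1 hi2 in
lemma gext_kunz_top : kunz (gext G i l) (mult G) = i := by
  have hm : 1 ≤ mult G := mult_pos G
  rw [gext_kunz hl hk hi1 hi2 hm le_rfl]
  unfold nk
  simp

end construction

lemma gapset_eq_of_kunz {G₁ G₂ : Finset ℕ} (h₁ : IsGapset G₁) (h₂ : IsGapset G₂)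
    (hm : mult G₁ = mult G₂)
    (hk : ∀ r, 1 ≤ r → r < mult G₁ → kunz G₁ r = kunz G₂ r) : G₁ = G₂ := by
  ext x
  rw [mem_char h₁, mem_char h₂, ← hm]
  rcases Nat.eq_zero_or_pos (x % mult G₁) with h0 | h0
  · simp [h0]
  · rw [hk _ (by omega) (Nat.mod_lt _ (mult_pos G₁))]

lemma nk_eq_kunz {G : Finset ℕ} {i r : ℕ} (h : r ≠ mult G) : nk G i r = kunz G r := by
  unfold nk; rw [if_neg h]

lemma gapset_bound {G : Finset ℕ} (hG : IsGapset G) {z : ℕ} (hz : z ∈ G) : z ≤ 2 * G.card := by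
  have hsub : Finset.Icc 1 z ⊆ G ∪ G.image (fun w => z - w) := by
    intro x hx
    rw [Finset.mem_Icc] at hx
    rcases Nat.eq_or_lt_of_le hx.2 with rfl | hlt
    · exact Finset.mem_union_left _ hz
    · rcases hG.2 z hz x (z - x) (by omega) (by omega) (by omega) with h | h
      · exact Finset.mem_union_left _ h
      · exact Finset.mem_union_right _ (Finset.mem_image.2 ⟨z - x, h, by omega⟩)
  have h1 := Finset.card_le_card hsub
  have h2 := Finset.card_union_le G (G.image (fun w => z - w))
  have h3 := Finset.card_image_le (s := G) (f := fun w => z - w)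
  rw [Nat.card_Icc] at h1
  omega



noncomputable def TT (l g' : ℕ) : Finset (Finset ℕ) :=
  @Finset.filter _ (fun G => G ∈ Gamma' g' l) (Classical.decPred _)
    ((Finset.range (2 * g' + 1)).powerset)

lemma TT_mem {l g' : ℕ} {G : Finset ℕ} : G ∈ TT l g' ↔ G ∈ Gamma' g' l := by
  classical
  unfold TT
  rw [Finset.mem_filter, Finset.mem_powerset, and_iff_right_iff_imp]
  intro hGam z hz
  rw [Finset.mem_range]
  have h1 := gapset_bound hGam.1 hz
  rw [hGam.2.1] at h1
  omega

lemma ncard_eq_TT (l g' : ℕ) : (Gamma' g' l).ncard = (TT l g').card := by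
  rw [show Gamma' g' l = ↑(TT l g') from Set.ext fun G => TT_mem.symm, Set.ncard_coe_finset]

theorem n'_lower_bound (g l : ℕ) (hg : 0 < g) (hl : 0 < l) :
    ∑ i ∈ Finset.Icc l (2 * l), n' ((g : ℤ) - (i : ℤ)) l ≤ n' (g : ℤ) l := by
  classical
  have hrhs : n' (g : ℤ) l = (TT l g).card := by
    unfold n'
    rw [if_neg (by omega)]
    have h1 : ((g : ℤ)).toNat = g := by omega
    rw [h1, ncard_eq_TT]
  rw [hrhs]
  have hsum : ∑ i ∈ Finset.Icc l (2 * l), n' ((g : ℤ) - i) l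
      = ∑ i ∈ (Finset.Icc l (2 * l)).filter (fun i => i ≤ g), (TT l (g - i)).card := by
    rw [← Finset.sum_filter_of_ne (p := fun i => i ≤ g) (fun i _ hne => by
      by_contra hgt
      exact hne (by unfold n'; rw [if_pos (by omega)]))]
    refine Finset.sum_congr rfl (fun i hi => ?_)
    rw [Finset.mem_filter] at hi
    unfold n'
    rw [if_neg (by omega)]
    have h1 : ((g : ℤ) - i).toNat = g - i := by omega
    rw [h1, ncard_eq_TT]
  rw [hsum]
  have hdisj : ∀ i ∈ (Finset.Icc l (2 * l)).filter (fun i => i ≤ g),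
      ∀ j ∈ (Finset.Icc l (2 * l)).filter (fun i => i ≤ g), i ≠ j →
      Disjoint (TT l (g - i)) (TT l (g - j)) := by
    intro i hi j hj hij
    rw [Finset.mem_filter] at hi hj
    rw [Finset.disjoint_left]
    intro G hGi hGj
    have h1 := (TT_mem.1 hGi).2.1
    have h2 := (TT_mem.1 hGj).2.1
    omega
  rw [← Finset.card_biUnion hdisj]
  refine Finset.card_le_card_of_injOn (fun G => gext G (g - G.card) l) ?_ ?_
  · intro G hG
    rw [Finset.mem_coe, Finset.mem_biUnion] at hG
    obtain ⟨i, hiS, hGT⟩ := hG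
    rw [Finset.mem_filter, Finset.mem_Icc] at hiS
    obtain ⟨hgap, hcard, hkz⟩ := TT_mem.1 hGT
    have hci : g - G.card = i := by omega
    simp only [hci]
    rw [Finset.mem_coe, TT_mem]
    refine ⟨gext_gapset hgap hkz hiS.1.1 hiS.1.2, ?_,
      gext_kunz_range hgap hl hkz hiS.1.1 hiS.1.2⟩
    rw [gext_card hgap hl hkz hiS.1.1 hiS.1.2, hcard]
    omega
  · intro G₁ h₁ G₂ h₂ heq
    simp only at heq
    rw [Finset.mem_coe, Finset.mem_biUnion] at h₁ h₂
    obtain ⟨i₁, hi₁, hT₁⟩ := h₁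
    obtain ⟨i₂, hi₂, hT₂⟩ := h₂
    rw [Finset.mem_filter, Finset.mem_Icc] at hi₁ hi₂
    obtain ⟨hgap₁, hcard₁, hkz₁⟩ := TT_mem.1 hT₁
    obtain ⟨hgap₂, hcard₂, hkz₂⟩ := TT_mem.1 hT₂
    have e₁ : g - G₁.card = i₁ := by omega
    have e₂ : g - G₂.card = i₂ := by omega
    rw [e₁, e₂] at heq
    have hm : mult G₁ = mult G₂ := by
      have a₁ := gext_mult hl hkz₁ hi₁.1.1 hi₁.1.2
      have a₂ := gext_mult hl hkz₂ hi₂.1.1 hi₂.1.2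
      rw [heq] at a₁
      omega
    refine gapset_eq_of_kunz hgap₁ hgap₂ hm (fun r h1 h2 => ?_)
    have b₁ := gext_kunz hl hkz₁ hi₁.1.1 hi₁.1.2 h1 (le_of_lt h2)
    have b₂ := gext_kunz hl hkz₂ hi₂.1.1 hi₂.1.2 h1 (by omega)
    rw [heq, b₂] at b₁
    rw [← nk_eq_kunz (i := i₁) (G := G₁) (by omega), ← nk_eq_kunz (i := i₂) (G := G₂) (by omega)]
    omega
end

section
/- Let n'_g denote the number of gapsets of genus g with depth at most 3. Then for all g ≥ 3, n'_{g−1} + n'_{g−2} ≤ n'_g ≤ n'_{g−1} + n'_{g−2} + n'_{g−3}. -/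
noncomputable def nDepth3 (g : ℕ) : ℕ :=
  {G : Finset ℕ | IsGapset G ∧ G.card = g ∧ gapDepth G ≤ 3}.ncard

-- assume s1 contents available; for scratch, re-import by concatenation later

lemma notmem_of_sup_lt {G : Finset ℕ} {s : ℕ} (h : G.sup id < s) : s ∉ G := fun hmem =>
  absurd (Finset.le_sup (f := id) hmem) (by simpa using Nat.not_le.2 h)

lemma lt_mult_mem (G : Finset ℕ) {s : ℕ} (h0 : 0 < s) (h : s < mult G) : s ∈ G := by
  by_contra hs
  have : s ∈ {s : ℕ | 0 < s ∧ s ∉ G} := ⟨h0, hs⟩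
  have := Nat.sInf_le this
  unfold mult at h; omega

lemma conductor_spec (G : Finset ℕ) : 0 < gapConductor G ∧ ∀ n, gapConductor G + n ∉ G := by
  have h : (G.sup id + 1) ∈ {s : ℕ | 0 < s ∧ ∀ n : ℕ, s + n ∉ G} :=
    ⟨Nat.succ_pos _, fun n => notmem_of_sup_lt (by omega)⟩
  exact Nat.sInf_mem ⟨_, h⟩

lemma mem_lt_conductor (G : Finset ℕ) {x : ℕ} (h : x ∈ G) : x < gapConductor G := by
  obtain ⟨h0, hc⟩ := conductor_spec G
  by_contra hx
  exact hc (x - gapConductor G) (by rwa [Nat.add_sub_cancel' (by omega)])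

lemma conductor_le (G : Finset ℕ) {s : ℕ} (h0 : 0 < s) (h : ∀ x ∈ G, x < s) :
    gapConductor G ≤ s := by
  have : s ∈ {s : ℕ | 0 < s ∧ ∀ n : ℕ, s + n ∉ G} :=
    ⟨h0, fun n hmem => by have := h _ hmem; omega⟩
  exact Nat.sInf_le this

lemma depth_le_three_iff (G : Finset ℕ) :
    gapDepth G ≤ 3 ↔ gapConductor G ≤ 3 * mult G := by
  have hm := (mult_mem G).1
  unfold gapDepth
  constructor
  · intro h
    by_contra hc
    have : 4 ≤ (gapConductor G + mult G - 1) / mult G := by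
      rw [Nat.le_div_iff_mul_le hm]; omega
    omega
  · intro h
    have : ¬ (4 ≤ (gapConductor G + mult G - 1) / mult G) := by
      rw [Nat.le_div_iff_mul_le hm]; omega
    omega

lemma mem_lt_of_depth (G : Finset ℕ) (hd : gapDepth G ≤ 3) {x : ℕ} (h : x ∈ G) :
    x < 3 * mult G := by
  have := mem_lt_conductor G h
  have := (depth_le_three_iff G).1 hd
  omega

lemma depth_of_bound (G : Finset ℕ) (h : ∀ x ∈ G, x < 3 * mult G) : gapDepth G ≤ 3 :=
  (depth_le_three_iff G).2 (conductor_le G (by have := (mult_mem G).1; omega) h)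

def TripCond (m : ℕ) (F1 F2 : Finset ℕ) : Prop :=
  1 ≤ m ∧ F1 ⊆ Finset.Ioo 0 m ∧ F2 ⊆ Finset.Ioo 0 m ∧
    ∀ z ∈ F2, ∀ a b : ℕ, a + b = z → a ∈ F1 ∨ b ∈ F1

def enc (m : ℕ) (F1 F2 : Finset ℕ) : Finset ℕ :=
  Finset.Ioo 0 m ∪ F1.image (· + m) ∪ F2.image (· + 2 * m)

lemma mem_enc {m : ℕ} {F1 F2 : Finset ℕ} (h1 : F1 ⊆ Finset.Ioo 0 m)
    (h2 : F2 ⊆ Finset.Ioo 0 m) {x : ℕ} :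
    x ∈ enc m F1 F2 ↔
      (0 < x ∧ x < m) ∨ (m < x ∧ x < 2 * m ∧ x - m ∈ F1) ∨ (2 * m < x ∧ x - 2 * m ∈ F2) := by
  simp only [enc, Finset.mem_union, Finset.mem_image, Finset.mem_Ioo]
  constructor
  · rintro ((h | ⟨a, ha, rfl⟩) | ⟨a, ha, rfl⟩)
    · exact Or.inl h
    · have := Finset.mem_Ioo.1 (h1 ha)
      right; left; refine ⟨by omega, by omega, by simpa using ha⟩
    · have := Finset.mem_Ioo.1 (h2 ha)
      right; right; exact ⟨by omega, by simpa using ha⟩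
  · rintro (h | ⟨hx1, hx2, hx3⟩ | ⟨hx1, hx2⟩)
    · exact Or.inl (Or.inl h)
    · exact Or.inl (Or.inr ⟨x - m, hx3, by omega⟩)
    · exact Or.inr ⟨x - 2 * m, hx2, by omega⟩

lemma enc_card {m : ℕ} {F1 F2 : Finset ℕ} (h1 : F1 ⊆ Finset.Ioo 0 m)
    (h2 : F2 ⊆ Finset.Ioo 0 m) :
    (enc m F1 F2).card = (m - 1) + F1.card + F2.card := by
  have d1 : Disjoint (Finset.Ioo 0 m) (F1.image (· + m)) := by
    rw [Finset.disjoint_right]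
    rintro x hx
    simp only [Finset.mem_image] at hx
    obtain ⟨a, _, rfl⟩ := hx
    simp only [Finset.mem_Ioo]; omega
  have d2 : Disjoint (Finset.Ioo 0 m ∪ F1.image (· + m)) (F2.image (· + 2 * m)) := by
    rw [Finset.disjoint_right]
    rintro x hx
    simp only [Finset.mem_image] at hx
    obtain ⟨a, ha, rfl⟩ := hx
    have := Finset.mem_Ioo.1 (h2 ha)
    simp only [Finset.mem_union, Finset.mem_Ioo, Finset.mem_image]
    push_neg
    refine ⟨by omega, fun b hb => ?_⟩
    have := Finset.mem_Ioo.1 (h1 hb)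
    omega
  rw [enc, Finset.card_union_of_disjoint d2, Finset.card_union_of_disjoint d1,
    Finset.card_image_of_injective _ (add_left_injective m),
    Finset.card_image_of_injective _ (add_left_injective (2 * m))]
  simp [Nat.card_Ioo]

lemma enc_gapset {m : ℕ} {F1 F2 : Finset ℕ} (h : TripCond m F1 F2) :
    IsGapset (enc m F1 F2) := by
  obtain ⟨hm, h1, h2, hc⟩ := h
  constructor
  · rw [mem_enc h1 h2]; omega
  · intro z hz x y hx hy hxy
    rw [mem_enc h1 h2] at hz
    rcases hz with h0 | ⟨hz1, hz2, hz3⟩ | ⟨hz1, hz2⟩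
    · left; rw [mem_enc h1 h2]; omega
    · -- z between m and 2m
      rcases Nat.lt_or_ge x m with hxm | hxm
      · left; rw [mem_enc h1 h2]; omega
      · right; rw [mem_enc h1 h2]; left
        have := Finset.mem_Ioo.1 (h1 hz3)
        omega
    · -- z ≥ 2m
      rcases Nat.lt_or_ge x m with hxm | hxm
      · left; rw [mem_enc h1 h2]; omega
      rcases Nat.lt_or_ge y m with hym | hym
      · right; rw [mem_enc h1 h2]; omega
      · have hz2' := Finset.mem_Ioo.1 (h2 hz2)
        have hab : (x - m) + (y - m) = z - 2 * m := by omega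
        rcases hc _ hz2 _ _ hab with ha | hb
        · left; rw [mem_enc h1 h2]
          have := Finset.mem_Ioo.1 (h1 ha)
          right; left
          refine ⟨by omega, by omega, by simpa using ha⟩
        · right; rw [mem_enc h1 h2]
          have := Finset.mem_Ioo.1 (h1 hb)
          right; left
          refine ⟨by omega, by omega, by simpa using hb⟩

lemma enc_mult {m : ℕ} {F1 F2 : Finset ℕ} (hm : 1 ≤ m) (h1 : F1 ⊆ Finset.Ioo 0 m)
    (h2 : F2 ⊆ Finset.Ioo 0 m) : mult (enc m F1 F2) = m := by
  have hnot : m ∉ enc m F1 F2 := by rw [mem_enc h1 h2]; omega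
  have hle : mult (enc m F1 F2) ≤ m := Nat.sInf_le ⟨hm, hnot⟩
  have := (mult_mem (enc m F1 F2)).2
  have h0 := (mult_mem (enc m F1 F2)).1
  by_contra hne
  have hlt : mult (enc m F1 F2) < m := by omega
  exact this (by rw [mem_enc h1 h2]; omega)

lemma enc_depth {m : ℕ} {F1 F2 : Finset ℕ} (hm : 1 ≤ m) (h1 : F1 ⊆ Finset.Ioo 0 m)
    (h2 : F2 ⊆ Finset.Ioo 0 m) : gapDepth (enc m F1 F2) ≤ 3 := by
  apply depth_of_bound
  intro x hx
  rw [enc_mult hm h1 h2]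
  rw [mem_enc h1 h2] at hx
  rcases hx with h | h | ⟨hx1, hx2⟩
  · omega
  · omega
  · have := Finset.mem_Ioo.1 (h2 hx2); omega

lemma enc_mem_left {m : ℕ} {F1 F2 : Finset ℕ} (h1 : F1 ⊆ Finset.Ioo 0 m)
    (h2 : F2 ⊆ Finset.Ioo 0 m) {a : ℕ} (ha : 0 < a) (ham : a < m) :
    a + m ∈ enc m F1 F2 ↔ a ∈ F1 := by
  rw [mem_enc h1 h2]
  constructor
  · rintro (h | ⟨_, _, h⟩ | ⟨h, _⟩)
    · omega
    · simpa using h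
    · omega
  · intro h
    right; left; refine ⟨by omega, by omega, by simpa using h⟩

lemma enc_mem_right {m : ℕ} {F1 F2 : Finset ℕ} (h1 : F1 ⊆ Finset.Ioo 0 m)
    (h2 : F2 ⊆ Finset.Ioo 0 m) {a : ℕ} (ha : 0 < a) (ham : a < m) :
    a + 2 * m ∈ enc m F1 F2 ↔ a ∈ F2 := by
  rw [mem_enc h1 h2]
  constructor
  · rintro (h | ⟨_, h, _⟩ | ⟨_, h⟩)
    · omega
    · omega
    · simpa using h
  · intro h
    right; right; exact ⟨by omega, by simpa using h⟩

noncomputable def decF1 (G : Finset ℕ) : Finset ℕ :=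
  (G.filter (fun x => mult G < x ∧ x < 2 * mult G)).image (· - mult G)

noncomputable def decF2 (G : Finset ℕ) : Finset ℕ :=
  (G.filter (fun x => 2 * mult G < x)).image (· - 2 * mult G)

lemma dec_spec (G : Finset ℕ) (hG : IsGapset G) (hd : gapDepth G ≤ 3) :
    TripCond (mult G) (decF1 G) (decF2 G) ∧ enc (mult G) (decF1 G) (decF2 G) = G := by
  set m := mult G with hm
  have hm0 : 0 < m := (mult_mem G).1
  have hmG : m ∉ G := (mult_mem G).2
  have h2mG : 2 * m ∉ G := by
    intro h
    rcases hG.2 _ h m m hm0 hm0 (by omega) with h' | h' <;> exact hmG h'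
  have hbd : ∀ x ∈ G, x < 3 * m := fun x hx => mem_lt_of_depth G hd hx
  have h1 : decF1 G ⊆ Finset.Ioo 0 m := by
    intro a ha
    simp only [decF1, Finset.mem_image, Finset.mem_filter] at ha
    obtain ⟨x, ⟨_, hx1, hx2⟩, rfl⟩ := ha
    simp only [Finset.mem_Ioo]; omega
  have h2 : decF2 G ⊆ Finset.Ioo 0 m := by
    intro a ha
    simp only [decF2, Finset.mem_image, Finset.mem_filter] at ha
    obtain ⟨x, ⟨hxG, hx1⟩, rfl⟩ := ha
    have := hbd x hxG
    simp only [Finset.mem_Ioo]; omega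
  have memF1 : ∀ a : ℕ, a ∈ decF1 G ↔ (0 < a ∧ a < m ∧ a + m ∈ G) := by
    intro a
    simp only [decF1, Finset.mem_image, Finset.mem_filter]
    constructor
    · rintro ⟨x, ⟨hxG, hx1, hx2⟩, rfl⟩
      refine ⟨by omega, by omega, by rwa [show x - m + m = x by omega]⟩
    · rintro ⟨ha0, ham, haG⟩
      exact ⟨a + m, ⟨haG, by omega, by omega⟩, by omega⟩
  have memF2 : ∀ a : ℕ, a ∈ decF2 G ↔ (0 < a ∧ a < m ∧ a + 2 * m ∈ G) := by
    intro a
    simp only [decF2, Finset.mem_image, Finset.mem_filter]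
    constructor
    · rintro ⟨x, ⟨hxG, hx1⟩, rfl⟩
      have := hbd x hxG
      refine ⟨by omega, by omega, by rwa [show x - 2 * m + 2 * m = x by omega]⟩
    · rintro ⟨ha0, ham, haG⟩
      exact ⟨a + 2 * m, ⟨haG, by omega⟩, by omega⟩
  constructor
  · refine ⟨hm0, h1, h2, ?_⟩
    intro z hz a b hab
    rw [memF2] at hz
    obtain ⟨hz0, hzm, hzG⟩ := hz
    rcases Nat.eq_zero_or_pos a with rfl | ha0
    · right
      rw [memF1]
      have : m + (m + b) = z + 2 * m := by omega
      rcases hG.2 _ hzG m (m + b) hm0 (by omega) this with h' | h'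
      · exact absurd h' hmG
      · exact ⟨by omega, by omega, by rwa [show b + m = m + b by omega]⟩
    rcases Nat.eq_zero_or_pos b with rfl | hb0
    · left
      rw [memF1]
      have : m + (m + a) = z + 2 * m := by omega
      rcases hG.2 _ hzG m (m + a) hm0 (by omega) this with h' | h'
      · exact absurd h' hmG
      · exact ⟨by omega, by omega, by rwa [show a + m = m + a by omega]⟩
    · have : (m + a) + (m + b) = z + 2 * m := by omega
      rcases hG.2 _ hzG (m + a) (m + b) (by omega) (by omega) this with h' | h'
      · left; rw [memF1]; exact ⟨ha0, by omega, by rwa [show a + m = m + a by omega]⟩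
      · right; rw [memF1]; exact ⟨hb0, by omega, by rwa [show b + m = m + b by omega]⟩
  · ext x
    rw [mem_enc h1 h2]
    constructor
    · rintro (h | ⟨hx1, hx2, hx3⟩ | ⟨hx1, hx3⟩)
      · exact lt_mult_mem G h.1 h.2
      · rw [memF1] at hx3
        have := hx3.2.2
        rwa [show x - m + m = x by omega] at this
      · rw [memF2] at hx3
        have := hx3.2.2
        rwa [show x - 2 * m + 2 * m = x by omega] at this
    · intro hxG
      have hx0 : 0 < x := by
        rcases Nat.eq_zero_or_pos x with rfl | h
        · exact absurd hxG hG.1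
        · exact h
      have hx3 := hbd x hxG
      rcases Nat.lt_or_ge x m with h | h
      · exact Or.inl ⟨hx0, h⟩
      rcases Nat.lt_or_ge x (2 * m) with h' | h'
      · have hxm : m < x := by
          rcases Nat.eq_or_lt_of_le h with rfl | h'' 
          · exact absurd hxG hmG
          · exact h''
        refine Or.inr (Or.inl ⟨hxm, h', ?_⟩)
        rw [memF1]
        refine ⟨by omega, by omega, by rwa [show x - m + m = x by omega]⟩
      · have hxm : 2 * m < x := by
          rcases Nat.eq_or_lt_of_le h' with rfl | h''
          · exact absurd hxG h2mG
          · exact h''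
        refine Or.inr (Or.inr ⟨hxm, ?_⟩)
        rw [memF2]
        refine ⟨by omega, by omega, by rwa [show x - 2 * m + 2 * m = x by omega]⟩

def Trip (g : ℕ) : Set (ℕ × Finset ℕ × Finset ℕ) :=
  {t | TripCond t.1 t.2.1 t.2.2 ∧ (t.1 - 1) + t.2.1.card + t.2.2.card = g}

lemma trip_finite (g : ℕ) : (Trip g).Finite := by
  apply Set.Finite.subset
    (Finset.finite_toSet ((Finset.range (g + 2)) ×ˢ
      ((Finset.range (g + 2)).powerset ×ˢ (Finset.range (g + 2)).powerset)))
  rintro ⟨m, F1, F2⟩ ⟨⟨hm, h1, h2, _⟩, hcard⟩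
  simp only [Finset.coe_product, Set.mem_prod, Finset.mem_coe, Finset.mem_range,
    Finset.mem_powerset]
  have hIoo : Finset.Ioo 0 m ⊆ Finset.range (g + 2) := by
    intro x hx
    simp only [Finset.mem_Ioo] at hx
    simp only [Finset.mem_range]
    omega
  exact ⟨by omega, h1.trans hIoo, h2.trans hIoo⟩

def encT (t : ℕ × Finset ℕ × Finset ℕ) : Finset ℕ := enc t.1 t.2.1 t.2.2

lemma enc_bijOn (g : ℕ) :
    Set.BijOn encT (Trip g) {G : Finset ℕ | IsGapset G ∧ G.card = g ∧ gapDepth G ≤ 3} := by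
  refine ⟨?_, ?_, ?_⟩
  · rintro ⟨m, F1, F2⟩ ⟨⟨hm, h1, h2, hc⟩, hcard⟩
    refine ⟨enc_gapset ⟨hm, h1, h2, hc⟩, ?_, enc_depth hm h1 h2⟩
    rw [encT, enc_card h1 h2]; exact hcard
  · rintro ⟨m, F1, F2⟩ ⟨⟨hm, h1, h2, _⟩, _⟩ ⟨m', F1', F2'⟩ ⟨⟨hm', h1', h2', _⟩, _⟩ heq
    simp only [encT] at heq
    dsimp only at hm h1 h2 hm' h1' h2' heq ⊢
    have hmm : m = m' := by
      rw [← enc_mult hm h1 h2, ← enc_mult hm' h1' h2', heq]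
    subst hmm
    have hF1 : F1 = F1' := by
      ext a
      constructor
      · intro ha
        have hb := Finset.mem_Ioo.1 (h1 ha)
        have hmem := (enc_mem_left h1 h2 hb.1 hb.2).2 ha
        rw [heq] at hmem
        exact (enc_mem_left h1' h2' hb.1 hb.2).1 hmem
      · intro ha
        have hb := Finset.mem_Ioo.1 (h1' ha)
        have hmem := (enc_mem_left h1' h2' hb.1 hb.2).2 ha
        rw [← heq] at hmem
        exact (enc_mem_left h1 h2 hb.1 hb.2).1 hmem
    have hF2 : F2 = F2' := by
      ext a
      constructor
      · intro ha
        have hb := Finset.mem_Ioo.1 (h2 ha)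
        have hmem := (enc_mem_right h1 h2 hb.1 hb.2).2 ha
        rw [heq] at hmem
        exact (enc_mem_right h1' h2' hb.1 hb.2).1 hmem
      · intro ha
        have hb := Finset.mem_Ioo.1 (h2' ha)
        have hmem := (enc_mem_right h1' h2' hb.1 hb.2).2 ha
        rw [← heq] at hmem
        exact (enc_mem_right h1 h2 hb.1 hb.2).1 hmem
    simp [hF1, hF2]
  · rintro G ⟨hG, hcard, hd⟩
    obtain ⟨ht, henc⟩ := dec_spec G hG hd
    refine ⟨(mult G, decF1 G, decF2 G), ⟨ht, ?_⟩, henc⟩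
    have : (enc (mult G) (decF1 G) (decF2 G)).card = G.card := by rw [henc]
    rw [enc_card ht.2.1 ht.2.2.1] at this
    dsimp only
    omega

lemma nDepth3_eq (g : ℕ) : nDepth3 g = (Trip g).ncard := by
  rw [nDepth3, ← (enc_bijOn g).image_eq,
    Set.ncard_image_of_injOn (enc_bijOn g).injOn]

lemma tripcond_sub {m : ℕ} {F1 F2 : Finset ℕ} (h : TripCond m F1 F2) : F2 ⊆ F1 := by
  intro z hz
  rcases h.2.2.2 z hz 0 z (by omega) with h' | h'
  · exact absurd (Finset.mem_Ioo.1 (h.2.1 h')).1 (by omega)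
  · exact h'

lemma trip_mult_ge {g : ℕ} (hg : 1 ≤ g) {t : ℕ × Finset ℕ × Finset ℕ} (ht : t ∈ Trip g) :
    2 ≤ t.1 := by
  obtain ⟨⟨hm, h1, h2, _⟩, hcard⟩ := ht
  by_contra h
  have hm1 : t.1 = 1 := by omega
  have : t.2.1 = ∅ := by
    rw [← Finset.subset_empty]
    intro x hx
    have := Finset.mem_Ioo.1 (h1 hx)
    omega
  have h2' : t.2.2 = ∅ := by
    rw [← Finset.subset_empty]
    intro x hx
    have := Finset.mem_Ioo.1 (h2 hx)
    omega
  rw [hm1, this, h2'] at hcard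
  simp at hcard
  omega

def phiT (t : ℕ × Finset ℕ × Finset ℕ) : ℕ × Finset ℕ × Finset ℕ :=
  (t.1 + 1, t.2.1, t.2.2)

def psiT (t : ℕ × Finset ℕ × Finset ℕ) : ℕ × Finset ℕ × Finset ℕ :=
  (t.1 + 1, insert t.1 t.2.1, t.2.2)

lemma Ioo_mono {m m' : ℕ} (h : m ≤ m') : Finset.Ioo 0 m ⊆ Finset.Ioo 0 m' := by
  intro x hx
  have := Finset.mem_Ioo.1 hx
  exact Finset.mem_Ioo.2 (by omega)

lemma mem_Trip {g m : ℕ} {F1 F2 : Finset ℕ} :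
    (m, F1, F2) ∈ Trip g ↔ TripCond m F1 F2 ∧ (m - 1) + F1.card + F2.card = g := Iff.rfl

lemma phi_maps {g : ℕ} (hg : 1 ≤ g) : ∀ t ∈ Trip (g - 1), phiT t ∈ Trip g := by
  rintro ⟨m, F1, F2⟩ ht
  obtain ⟨⟨hm, h1, h2, hc⟩, hcard⟩ := mem_Trip.1 ht
  show (m + 1, F1, F2) ∈ Trip g
  rw [mem_Trip]
  refine ⟨⟨by omega, h1.trans (Ioo_mono (by omega)), h2.trans (Ioo_mono (by omega)), hc⟩, ?_⟩
  omega

lemma psi_maps {g : ℕ} (hg : 2 ≤ g) : ∀ t ∈ Trip (g - 2), psiT t ∈ Trip g := by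
  rintro ⟨m, F1, F2⟩ ht
  obtain ⟨⟨hm, h1, h2, hc⟩, hcard⟩ := mem_Trip.1 ht
  have hmF1 : m ∉ F1 := fun h => by have := Finset.mem_Ioo.1 (h1 h); omega
  show (m + 1, insert m F1, F2) ∈ Trip g
  rw [mem_Trip]
  refine ⟨⟨by omega, ?_, h2.trans (Ioo_mono (by omega)), ?_⟩, ?_⟩
  · intro x hx
    simp only [Finset.mem_insert] at hx
    rcases hx with rfl | hx
    · exact Finset.mem_Ioo.2 (by omega)
    · have := Finset.mem_Ioo.1 (h1 hx)
      exact Finset.mem_Ioo.2 (by omega)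
  · intro z hz a b hab
    rcases hc z hz a b hab with h | h
    · exact Or.inl (Finset.mem_insert_of_mem h)
    · exact Or.inr (Finset.mem_insert_of_mem h)
  · rw [Finset.card_insert_of_notMem hmF1]
    omega

lemma lower_bound {g : ℕ} (hg : 3 ≤ g) :
    (Trip (g - 1)).ncard + (Trip (g - 2)).ncard ≤ (Trip g).ncard := by
  have hφinj : Set.InjOn phiT (Trip (g - 1)) := by
    rintro ⟨m, F1, F2⟩ _ ⟨m', F1', F2'⟩ _ heq
    simp only [phiT, Prod.mk.injEq] at heq
    obtain ⟨ha, hb, hc⟩ := heq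
    simp only [Prod.mk.injEq]
    exact ⟨by omega, hb, hc⟩
  have hψinj : Set.InjOn psiT (Trip (g - 2)) := by
    rintro ⟨m, F1, F2⟩ ⟨⟨_, h1, _, _⟩, _⟩ ⟨m', F1', F2'⟩ ⟨⟨_, h1', _, _⟩, _⟩ heq
    simp only [psiT, Prod.mk.injEq] at heq
    obtain ⟨hm, hF1, hF2⟩ := heq
    dsimp only at *
    have hm' : m = m' := by omega
    subst hm'
    have hmF1 : m ∉ F1 := fun h => by have := Finset.mem_Ioo.1 (h1 h); omega
    have hmF1' : m ∉ F1' := fun h => by have := Finset.mem_Ioo.1 (h1' h); omega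
    have : F1 = F1' := by
      have := congrArg (fun s => Finset.erase s m) hF1
      simpa [Finset.erase_insert, hmF1, hmF1'] using this
    simp [this, hF2]
  have hdisj : Disjoint (phiT '' Trip (g - 1)) (psiT '' Trip (g - 2)) := by
    rw [Set.disjoint_left]
    rintro x ⟨⟨m, F1, F2⟩, ⟨⟨_, h1, _, _⟩, _⟩, rfl⟩ ⟨⟨m', F1', F2'⟩, ⟨⟨_, h1', _, _⟩, _⟩, heq⟩
    simp only [psiT, phiT, Prod.mk.injEq] at heq
    obtain ⟨hm, hF1, _⟩ := heq
    dsimp only at *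
    have hm' : m' = m := by omega
    subst hm'
    have hmF1 : m' ∉ F1 := fun h => by have := Finset.mem_Ioo.1 (h1 h); omega
    rw [← hF1] at hmF1
    exact hmF1 (Finset.mem_insert_self _ _)
  have hsub : phiT '' Trip (g - 1) ∪ psiT '' Trip (g - 2) ⊆ Trip g := by
    rintro x (⟨t, ht, rfl⟩ | ⟨t, ht, rfl⟩)
    · exact phi_maps (by omega) t ht
    · exact psi_maps (by omega) t ht
  calc (Trip (g - 1)).ncard + (Trip (g - 2)).ncard
      = (phiT '' Trip (g - 1)).ncard + (psiT '' Trip (g - 2)).ncard := by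
        rw [Set.ncard_image_of_injOn hφinj, Set.ncard_image_of_injOn hψinj]
    _ = (phiT '' Trip (g - 1) ∪ psiT '' Trip (g - 2)).ncard := by
        rw [Set.ncard_union_eq hdisj ((trip_finite _).image _) ((trip_finite _).image _)]
    _ ≤ (Trip g).ncard := Set.ncard_le_ncard hsub (trip_finite g)

def delT (t : ℕ × Finset ℕ × Finset ℕ) : ℕ × Finset ℕ × Finset ℕ :=
  (t.1 - 1, t.2.1.erase (t.1 - 1), t.2.2.erase (t.1 - 1))

lemma erase_sub_Ioo {m : ℕ} {F : Finset ℕ} (h : F ⊆ Finset.Ioo 0 m) :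
    F.erase (m - 1) ⊆ Finset.Ioo 0 (m - 1) := by
  intro x hx
  rw [Finset.mem_erase] at hx
  have := Finset.mem_Ioo.1 (h hx.2)
  exact Finset.mem_Ioo.2 (by omega)

lemma del_cond {m : ℕ} {F1 F2 : Finset ℕ} (h : TripCond m F1 F2) (hm : 2 ≤ m) :
    TripCond (m - 1) (F1.erase (m - 1)) (F2.erase (m - 1)) := by
  obtain ⟨_, h1, h2, hc⟩ := h
  refine ⟨by omega, erase_sub_Ioo h1, erase_sub_Ioo h2, ?_⟩
  intro z hz a b hab
  rw [Finset.mem_erase] at hz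
  have hzlt := Finset.mem_Ioo.1 (h2 hz.2)
  rcases hc z hz.2 a b hab with h' | h'
  · exact Or.inl (Finset.mem_erase.2 ⟨by omega, h'⟩)
  · exact Or.inr (Finset.mem_erase.2 ⟨by omega, h'⟩)

lemma del_A {g : ℕ} (hg : 1 ≤ g) : ∀ t ∈ {t ∈ Trip g | t.1 - 1 ∉ t.2.1},
    delT t ∈ Trip (g - 1) := by
  rintro ⟨m, F1, F2⟩ ⟨ht, hA⟩
  have hm2 := trip_mult_ge hg ht
  obtain ⟨hcond, hcard⟩ := mem_Trip.1 ht
  dsimp only at hA hm2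
  have hF2 : m - 1 ∉ F2 := fun h => hA (tripcond_sub hcond h)
  show (m - 1, F1.erase (m - 1), F2.erase (m - 1)) ∈ Trip (g - 1)
  rw [mem_Trip]
  refine ⟨del_cond hcond hm2, ?_⟩
  rw [Finset.erase_eq_of_notMem hA, Finset.erase_eq_of_notMem hF2]
  omega

lemma del_B {g : ℕ} (hg : 1 ≤ g) : ∀ t ∈ {t ∈ Trip g | t.1 - 1 ∈ t.2.1 ∧ t.1 - 1 ∉ t.2.2},
    delT t ∈ Trip (g - 2) := by
  rintro ⟨m, F1, F2⟩ ⟨ht, hB1, hB2⟩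
  have hm2 := trip_mult_ge hg ht
  obtain ⟨hcond, hcard⟩ := mem_Trip.1 ht
  dsimp only at hB1 hB2 hm2
  show (m - 1, F1.erase (m - 1), F2.erase (m - 1)) ∈ Trip (g - 2)
  rw [mem_Trip]
  refine ⟨del_cond hcond hm2, ?_⟩
  rw [Finset.erase_eq_of_notMem hB2, Finset.card_erase_of_mem hB1]
  have : 1 ≤ F1.card := Finset.card_pos.2 ⟨_, hB1⟩
  omega

lemma del_C {g : ℕ} (hg : 1 ≤ g) : ∀ t ∈ {t ∈ Trip g | t.1 - 1 ∈ t.2.2},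
    delT t ∈ Trip (g - 3) := by
  rintro ⟨m, F1, F2⟩ ⟨ht, hC⟩
  have hm2 := trip_mult_ge hg ht
  obtain ⟨hcond, hcard⟩ := mem_Trip.1 ht
  dsimp only at hC hm2
  have hC1 : m - 1 ∈ F1 := tripcond_sub hcond hC
  show (m - 1, F1.erase (m - 1), F2.erase (m - 1)) ∈ Trip (g - 3)
  rw [mem_Trip]
  refine ⟨del_cond hcond hm2, ?_⟩
  rw [Finset.card_erase_of_mem hC, Finset.card_erase_of_mem hC1]
  have : 1 ≤ F1.card := Finset.card_pos.2 ⟨_, hC1⟩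
  have : 1 ≤ F2.card := Finset.card_pos.2 ⟨_, hC⟩
  omega

lemma del_inj {g : ℕ} (hg : 1 ≤ g) {S : Set (ℕ × Finset ℕ × Finset ℕ)}
    (hS : S ⊆ Trip g)
    (hrec : ∀ t ∈ S, ∀ t' ∈ S, t.1 = t'.1 →
      t.2.1.erase (t.1 - 1) = t'.2.1.erase (t.1 - 1) →
      t.2.2.erase (t.1 - 1) = t'.2.2.erase (t.1 - 1) → t = t') :
    Set.InjOn delT S := by
  intro t ht t' ht' heq
  simp only [delT, Prod.mk.injEq] at heq
  obtain ⟨h1, h2, h3⟩ := heq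
  have hm : t.1 = t'.1 := by
    have := trip_mult_ge hg (hS ht)
    have := trip_mult_ge hg (hS ht')
    omega
  refine hrec t ht t' ht' hm ?_ ?_
  · rw [hm] at h2 ⊢; exact h2
  · rw [hm] at h3 ⊢; exact h3

lemma upper_bound {g : ℕ} (hg : 3 ≤ g) :
    (Trip g).ncard ≤ (Trip (g - 1)).ncard + (Trip (g - 2)).ncard + (Trip (g - 3)).ncard := by
  set A := {t ∈ Trip g | t.1 - 1 ∉ t.2.1} with hA
  set B := {t ∈ Trip g | t.1 - 1 ∈ t.2.1 ∧ t.1 - 1 ∉ t.2.2} with hB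
  set C := {t ∈ Trip g | t.1 - 1 ∈ t.2.2} with hC
  have hg1 : 1 ≤ g := by omega
  have hAs : A ⊆ Trip g := fun t ht => ht.1
  have hBs : B ⊆ Trip g := fun t ht => ht.1
  have hCs : C ⊆ Trip g := fun t ht => ht.1
  have hcover : Trip g = A ∪ B ∪ C := by
    ext t
    constructor
    · intro ht
      by_cases h1 : t.1 - 1 ∈ t.2.1
      · by_cases h2 : t.1 - 1 ∈ t.2.2
        · exact Or.inr ⟨ht, h2⟩
        · exact Or.inl (Or.inr ⟨ht, h1, h2⟩)
      · exact Or.inl (Or.inl ⟨ht, h1⟩)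
    · rintro ((h | h) | h)
      · exact h.1
      · exact h.1
      · exact h.1
  have hdAB : Disjoint A B := by
    rw [Set.disjoint_left]
    rintro t ⟨_, h1⟩ ⟨_, h2, _⟩
    exact h1 h2
  have hdABC : Disjoint (A ∪ B) C := by
    rw [Set.disjoint_left]
    rintro t (⟨ht, h1⟩ | ⟨ht, _, h2⟩) ⟨ht', h3⟩
    · exact h1 (tripcond_sub (mem_Trip.1 (by exact ht)).1 h3)
    · exact h2 h3
  have hfinA : A.Finite := (trip_finite g).subset hAs
  have hfinB : B.Finite := (trip_finite g).subset hBs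
  have hfinC : C.Finite := (trip_finite g).subset hCs
  have hcnt : (Trip g).ncard = A.ncard + B.ncard + C.ncard := by
    rw [hcover, Set.ncard_union_eq hdABC (hfinA.union hfinB) hfinC,
      Set.ncard_union_eq hdAB hfinA hfinB]
  rw [hcnt]
  have hinjA : Set.InjOn delT A := by
    apply del_inj hg1 hAs
    rintro ⟨m, F1, F2⟩ ⟨ht, h1⟩ ⟨m', F1', F2'⟩ ⟨ht', h1'⟩ hm hF1 hF2
    dsimp only at *
    subst hm
    have hF2m : m - 1 ∉ F2 := fun h => h1 (tripcond_sub (mem_Trip.1 ht).1 h)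
    have hF2m' : m - 1 ∉ F2' := fun h => h1' (tripcond_sub (mem_Trip.1 ht').1 h)
    rw [Finset.erase_eq_of_notMem h1, Finset.erase_eq_of_notMem h1'] at hF1
    rw [Finset.erase_eq_of_notMem hF2m, Finset.erase_eq_of_notMem hF2m'] at hF2
    simp [hF1, hF2]
  have hinjB : Set.InjOn delT B := by
    apply del_inj hg1 hBs
    rintro ⟨m, F1, F2⟩ ⟨ht, h1, h2⟩ ⟨m', F1', F2'⟩ ⟨ht', h1', h2'⟩ hm hF1 hF2
    dsimp only at *
    subst hm
    have : F1 = F1' := by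
      rw [← Finset.insert_erase h1, ← Finset.insert_erase h1', hF1]
    rw [Finset.erase_eq_of_notMem h2, Finset.erase_eq_of_notMem h2'] at hF2
    simp [this, hF2]
  have hinjC : Set.InjOn delT C := by
    apply del_inj hg1 hCs
    rintro ⟨m, F1, F2⟩ ⟨ht, h1⟩ ⟨m', F1', F2'⟩ ⟨ht', h1'⟩ hm hF1 hF2
    dsimp only at *
    subst hm
    have hc1 : m - 1 ∈ F1 := tripcond_sub (mem_Trip.1 ht).1 h1
    have hc1' : m - 1 ∈ F1' := tripcond_sub (mem_Trip.1 ht').1 h1'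
    have e1 : F1 = F1' := by
      rw [← Finset.insert_erase hc1, ← Finset.insert_erase hc1', hF1]
    have e2 : F2 = F2' := by
      rw [← Finset.insert_erase h1, ← Finset.insert_erase h1', hF2]
    simp [e1, e2]
  have hle : ∀ (S : Set (ℕ × Finset ℕ × Finset ℕ)) (g' : ℕ), Set.InjOn delT S →
      (∀ t ∈ S, delT t ∈ Trip g') → S.Finite → S.ncard ≤ (Trip g').ncard := by
    intro S g' hinj hmaps hfin
    rw [← Set.ncard_image_of_injOn hinj]
    exact Set.ncard_le_ncard (fun x ⟨t, ht, he⟩ => he ▸ hmaps t ht) (trip_finite g')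
  have h1 := hle A (g - 1) hinjA (del_A hg1) hfinA
  have h2 := hle B (g - 2) hinjB (del_B hg1) hfinB
  have h3 := hle C (g - 3) hinjC (del_C hg1) hfinC
  omega

theorem eliahou_fromentin (g : ℕ) (hg : 3 ≤ g) :
    nDepth3 (g - 1) + nDepth3 (g - 2) ≤ nDepth3 g ∧
      nDepth3 g ≤ nDepth3 (g - 1) + nDepth3 (g - 2) + nDepth3 (g - 3) := by
  rw [nDepth3_eq, nDepth3_eq, nDepth3_eq, nDepth3_eq]
  exact ⟨lower_bound hg, upper_bound hg⟩
end

section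
/- If g is a positive integer and ℓ is an integer with g/2 < ℓ ≤ g, then the unique gapset of genus g with all Kunz coordinates in [ℓ, 2ℓ+1] is the gapset with Kunz coordinates (g), i.e., G = {1, 3, 5, …, 2g−1}. -/
lemma gapset_one_mem {G : Finset ℕ} (hG : IsGapset G) (hne : G.Nonempty) : 1 ∈ G := by
  by_contra h1
  obtain ⟨z0, hz0⟩ := hne
  suffices h : ∀ z, z ∉ G from h z0 hz0
  intro z
  induction z using Nat.strong_induction_on with
  | _ z ih =>
    intro hz
    match z, hz with
    | 0, hz => exact hG.1 hz
    | 1, hz => exact h1 hz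
    | (n+2), hz =>
      rcases hG.2 (n+2) hz 1 (n+1) one_pos (Nat.succ_pos n) (by omega) with h | h
      · exact h1 h
      · exact ih (n+1) (by omega) h

lemma gapset_no_multiple {G : Finset ℕ} (hG : IsGapset G) {m : ℕ} (hm0 : 0 < m)
    (hmG : m ∉ G) : ∀ z, z % m = 0 → z ∉ G := by
  intro z
  induction z using Nat.strong_induction_on with
  | _ z ih =>
    intro hzm hz
    have hz0 : z ≠ 0 := fun h => hG.1 (h ▸ hz)
    have hm_dvd : m ∣ z := Nat.dvd_of_mod_eq_zero hzm
    have hzm' : m ≤ z := Nat.le_of_dvd (Nat.pos_of_ne_zero hz0) hm_dvd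
    rcases eq_or_lt_of_le hzm' with h | h
    · exact hmG (h ▸ hz)
    · rcases hG.2 z hz m (z - m) hm0 (by omega) (by omega) with h' | h'
      · exact hmG h'
      · exact ih (z - m) (by omega)
          (by
          have : m ∣ (z - m) := Nat.dvd_sub hm_dvd dvd_rfl
          exact Nat.mod_eq_zero_of_dvd this) h'

theorem unique_gapset_large_level (g l : ℕ) (hg : 0 < g) (h1 : g < 2 * l) (h2 : l ≤ g) :
    {G : Finset ℕ | IsGapset G ∧ G.card = g ∧
        ∀ i : ℕ, 1 ≤ i → i < mult G → kunz G i ∈ Set.Icc l (2 * l + 1)} =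
      {(Finset.range g).image (fun j => 2 * j + 1)} := by
  have hl : 0 < l := by omega
  have hinj : Function.Injective (fun j : ℕ => 2 * j + 1) := by
    intro a b h; simpa using h
  set E : Finset ℕ := (Finset.range g).image (fun j => 2 * j + 1) with hE
  have hEcard : E.card = g := by
    rw [hE, Finset.card_image_of_injective _ hinj, Finset.card_range]
  have hmemE : ∀ z, z ∈ E ↔ ∃ j, j < g ∧ z = 2 * j + 1 := by
    intro z
    simp only [hE, Finset.mem_image, Finset.mem_range]
    constructor
    · rintro ⟨j, hj, rfl⟩; exact ⟨j, hj, rfl⟩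
    · rintro ⟨j, hj, rfl⟩; exact ⟨j, hj, rfl⟩
  ext G
  simp only [Set.mem_setOf_eq, Set.mem_singleton_iff]
  constructor
  · rintro ⟨hgap, hcard, hkunz⟩
    have hne : G.Nonempty := Finset.card_pos.mp (hcard ▸ hg)
    have h1G : 1 ∈ G := gapset_one_mem hgap hne
    -- facts about mult G
    have hSne : {s : ℕ | 0 < s ∧ s ∉ G}.Nonempty := by
      refine ⟨G.sup id + 1, Nat.succ_pos _, fun h => ?_⟩
      have h2' := Finset.le_sup (f := id) h
      simp only [id_eq] at h2'
      omega
    have hm_mem := Nat.sInf_mem hSne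
    rw [show sInf {s : ℕ | 0 < s ∧ s ∉ G} = mult G from rfl] at hm_mem
    obtain ⟨hm_pos, hm_not⟩ := hm_mem
    have hm2 : 2 ≤ mult G := by
      rcases Nat.lt_or_ge (mult G) 2 with h | h
      · have h1' : mult G = 1 := by omega
        exact absurd h1G (h1' ▸ hm_not)
      · exact h
    have hnomul : ∀ z ∈ G, z % mult G ≠ 0 := fun z hz h =>
      gapset_no_multiple hgap hm_pos hm_not z h hz
    -- card as sum of kunz coordinates
    have hsum : G.card = ∑ i ∈ Finset.range (mult G), kunz G i := by
      apply Finset.card_eq_sum_card_fiberwise (f := fun z => z % mult G)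
      intro x _
      exact Finset.mem_range.mpr (Nat.mod_lt _ hm_pos)
    -- mult G = 2
    have hm_eq : mult G = 2 := by
      by_contra hne2
      have hm3 : 3 ≤ mult G := by omega
      have hsub : ({1, 2} : Finset ℕ) ⊆ Finset.range (mult G) := by
        intro x hx; simp at hx; rcases hx with rfl | rfl <;> simp <;> omega
      have hle : kunz G 1 + kunz G 2 ≤ ∑ i ∈ Finset.range (mult G), kunz G i := by
        calc kunz G 1 + kunz G 2 = ∑ i ∈ ({1, 2} : Finset ℕ), kunz G i := by
              rw [Finset.sum_pair (by norm_num)]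
          _ ≤ _ := Finset.sum_le_sum_of_subset hsub
      have hk1 := hkunz 1 le_rfl (by omega)
      have hk2 := hkunz 2 (by omega) (by omega)
      simp only [Set.mem_Icc] at hk1 hk2
      omega
    -- all elements of G are odd
    have hodd : ∀ z ∈ G, z % 2 = 1 := by
      intro z hz
      have := hnomul z hz
      rw [hm_eq] at this
      omega
    have h2G : 2 ∉ G := hm_eq ▸ hm_not
    -- downward closure among odds
    have hdown : ∀ k, 2 * k + 1 ∈ G → ∀ i ≤ k, 2 * i + 1 ∈ G := by
      intro k
      induction k with
      | zero => intro h i hi; interval_cases i; exact h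
      | succ n ih =>
        intro h i hi
        have hprev : 2 * n + 1 ∈ G := by
          rcases hgap.2 _ h 2 (2 * n + 1) (by omega) (by omega) (by omega) with h' | h'
          · exact absurd h' h2G
          · exact h'
        rcases Nat.lt_or_ge i (n + 1) with h' | h'
        · exact ih hprev i (by omega)
        · have : i = n + 1 := by omega
          exact this ▸ h
    -- G ⊆ E
    have hGE : G ⊆ E := by
      intro z hz
      have hz1 := hodd z hz
      obtain ⟨k, hk⟩ : ∃ k, z = 2 * k + 1 := ⟨z / 2, by omega⟩
      rw [(hmemE z)]
      refine ⟨k, ?_, hk⟩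
      by_contra hkg
      push_neg at hkg
      -- then first k+1 odds are in G, card ≥ k+1 > g
      have hsub : (Finset.range (k + 1)).image (fun j => 2 * j + 1) ⊆ G := by
        intro x hx
        simp only [Finset.mem_image, Finset.mem_range] at hx
        obtain ⟨j, hj, rfl⟩ := hx
        exact hdown k (hk ▸ hz) j (by omega)
      have := Finset.card_le_card hsub
      rw [Finset.card_image_of_injective _ hinj, Finset.card_range, hcard] at this
      omega
    exact Finset.eq_of_subset_of_card_le hGE (by omega)
  · rintro rfl
    have h0E : (0 : ℕ) ∉ E := by
      rw [hmemE]; rintro ⟨j, _, hj⟩; omega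
    have h1E : (1 : ℕ) ∈ E := (hmemE 1).mpr ⟨0, hg, rfl⟩
    have h2E : (2 : ℕ) ∉ E := by
      rw [hmemE]; rintro ⟨j, _, hj⟩; omega
    have hmultE : mult E = 2 := by
      apply le_antisymm
      · exact Nat.sInf_le ⟨by norm_num, h2E⟩
      · have hmem := Nat.sInf_mem (⟨2, by norm_num, h2E⟩ :
          {s : ℕ | 0 < s ∧ s ∉ E}.Nonempty)
        have hp : 0 < mult E := hmem.1
        have hn : mult E ∉ E := hmem.2
        rcases Nat.lt_or_ge (mult E) 2 with h | h
        · have h1 : mult E = 1 := by omega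
          exact absurd h1E (h1 ▸ hn)
        · exact h
    refine ⟨⟨h0E, ?_⟩, hEcard, ?_⟩
    · intro z hz x y hx hy hxy
      obtain ⟨j, hj, rfl⟩ := (hmemE z).mp hz
      rcases Nat.even_or_odd x with hex | hox
      · right
        obtain ⟨i, hi⟩ : ∃ i, y = 2 * i + 1 := by
          obtain ⟨c, hc⟩ := hex; exact ⟨(y - 1) / 2, by omega⟩
        exact (hmemE y).mpr ⟨i, by omega, hi⟩
      · left
        obtain ⟨i, hi⟩ := hox
        exact (hmemE x).mpr ⟨i, by omega, by omega⟩
    · intro i hi1 hi2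
      rw [hmultE] at hi2
      have : i = 1 := by omega
      subst this
      have : kunz E 1 = g := by
        unfold kunz
        rw [hmultE]
        have : E.filter (fun z => z % 2 = 1) = E := by
          apply Finset.filter_true_of_mem
          intro z hz
          obtain ⟨j, _, rfl⟩ := (hmemE z).mp hz
          omega
        rw [this, hEcard]
      rw [this]
      exact Set.mem_Icc.mpr ⟨h2, by omega⟩
end
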